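/- arXiv:1207.0287 — 10 statements merged into one kernel-verified Lean document; each statement's English description precedes it below -/
import Mathlib

section
/- Let p and q be odd prime numbers with q = p + 2. The equation w² + 2 + 2(p+q)z² + 2z⁴ = 0 has a solution (z, w) with z, w ∈ ℚ₂ if and only if p ≡ 5 (mod 8). -/
set_option maxRecDepth 10000 in
private lemma core32 : ∀ r : Fin 32, r.1 % 2 = 1 → r.1 % 8 ≠ 5 →
    ∀ a b : ZMod 32, b ^ 2 + 2 + 2 * ((2 * r.1 + 2 : ℕ) : ZMod 32) * a ^ 2 + 2 * a ^ 4 ≠ 0 := by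
  decide

private lemma reduce_int (s : ℕ) (z w : ℚ_[2])
    (h : w ^ 2 + 2 + 2 * (s : ℚ_[2]) * z ^ 2 + 2 * z ^ 4 = 0) :
    ∃ a b : ℤ_[2], b ^ 2 + 2 + 2 * (s : ℤ_[2]) * a ^ 2 + 2 * a ^ 4 = 0 := by
  -- first, reduce to the case ‖z‖ ≤ 1
  obtain ⟨z, w, hz, h⟩ : ∃ z w : ℚ_[2], ‖z‖ ≤ 1 ∧
      w ^ 2 + 2 + 2 * (s : ℚ_[2]) * z ^ 2 + 2 * z ^ 4 = 0 := by
    rcases le_or_gt ‖z‖ 1 with hz | hz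
    · exact ⟨z, w, hz, h⟩
    · have hz0 : z ≠ 0 := by
        intro hz0; rw [hz0, norm_zero] at hz; linarith
      refine ⟨z⁻¹, w * (z⁻¹) ^ 2, ?_, ?_⟩
      · rw [norm_inv]
        exact inv_le_one_of_one_le₀ hz.le
      · have key : (w * (z⁻¹) ^ 2) ^ 2 + 2 + 2 * (s : ℚ_[2]) * (z⁻¹) ^ 2 + 2 * (z⁻¹) ^ 4
            = (w ^ 2 + 2 + 2 * (s : ℚ_[2]) * z ^ 2 + 2 * z ^ 4) * (z⁻¹) ^ 4 := by
          field_simp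
          ring
        rw [key, h, zero_mul]
  -- now ‖w‖ ≤ 1
  have hterm : ‖(2 : ℚ_[2]) + 2 * (s : ℚ_[2]) * z ^ 2 + 2 * z ^ 4‖ ≤ 1 := by
    have h2 : ‖(2 : ℚ_[2])‖ ≤ 1 := by
      have := Padic.norm_int_le_one (p := 2) 2
      simpa using this
    have hs : ‖(s : ℚ_[2])‖ ≤ 1 := by
      have := Padic.norm_int_le_one (p := 2) (s : ℤ)
      simpa using this
    have ht2 : ‖2 * (s : ℚ_[2]) * z ^ 2‖ ≤ 1 := by
      rw [norm_mul, norm_mul, norm_pow]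
      calc ‖(2:ℚ_[2])‖ * ‖(s:ℚ_[2])‖ * ‖z‖ ^ 2 ≤ 1 * 1 * 1 ^ 2 := by
            gcongr <;> positivity
        _ = 1 := by norm_num
    have ht3 : ‖2 * z ^ 4‖ ≤ 1 := by
      rw [norm_mul, norm_pow]
      calc ‖(2:ℚ_[2])‖ * ‖z‖ ^ 4 ≤ 1 * 1 ^ 4 := by gcongr <;> positivity
        _ = 1 := by norm_num
    calc ‖(2 : ℚ_[2]) + 2 * (s : ℚ_[2]) * z ^ 2 + 2 * z ^ 4‖
        ≤ max ‖(2 : ℚ_[2]) + 2 * (s : ℚ_[2]) * z ^ 2‖ ‖2 * z ^ 4‖ := Padic.nonarchimedean _ _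
      _ ≤ max (max ‖(2 : ℚ_[2])‖ ‖2 * (s : ℚ_[2]) * z ^ 2‖) ‖2 * z ^ 4‖ := by
          gcongr
          exact Padic.nonarchimedean _ _
      _ ≤ 1 := by
          apply max_le (max_le h2 ht2) ht3
  have hw2 : w ^ 2 = -((2 : ℚ_[2]) + 2 * (s : ℚ_[2]) * z ^ 2 + 2 * z ^ 4) := by linear_combination h
  have hw : ‖w‖ ≤ 1 := by
    have : ‖w‖ ^ 2 ≤ 1 := by
      rw [← norm_pow, hw2, norm_neg]; exact hterm
    nlinarith [norm_nonneg w]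
  set a : ℤ_[2] := ⟨z, hz⟩ with ha
  set b : ℤ_[2] := ⟨w, hw⟩ with hb
  refine ⟨a, b, ?_⟩
  have hcoea : ((a : ℤ_[2]) : ℚ_[2]) = z := rfl
  have hcoeb : ((b : ℤ_[2]) : ℚ_[2]) = w := rfl
  have hcast : ((b ^ 2 + 2 + 2 * (s : ℤ_[2]) * a ^ 2 + 2 * a ^ 4 : ℤ_[2]) : ℚ_[2]) = 0 := by
    push_cast [hcoea, hcoeb]
    exact h
  exact (PadicInt.coe_eq_zero).mp hcast

/-- Let `p` and `q` be odd prime numbers with `q = p + 2`. The equation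
`w² + 2 + 2(p+q)z² + 2z⁴ = 0` has a solution `(z, w)` with `z, w ∈ ℚ₂` if and only if
`p ≡ 5 (mod 8)`. -/
theorem stmt_1 (p q : ℕ) (hp : p.Prime) (hq : q.Prime) (hpo : Odd p) (hqo : Odd q)
    (hpq : q = p + 2) :
    (∃ z w : ℚ_[2], w ^ 2 + 2 + 2 * ((p : ℚ_[2]) + (q : ℚ_[2])) * z ^ 2 + 2 * z ^ 4 = 0) ↔
      p % 8 = 5 := by
  constructor
  · rintro ⟨z, w, h⟩
    by_contra hne
    have h' : w ^ 2 + 2 + 2 * ((p + q : ℕ) : ℚ_[2]) * z ^ 2 + 2 * z ^ 4 = 0 := by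
      push_cast
      exact h
    obtain ⟨a, b, hab⟩ := reduce_int (p + q) z w h'
    -- map to ZMod 32
    have h32 : (PadicInt.toZModPow (p := 2) 5 b) ^ 2 + 2
        + 2 * ((p + q : ℕ) : ZMod (2 ^ 5)) * (PadicInt.toZModPow (p := 2) 5 a) ^ 2
        + 2 * (PadicInt.toZModPow (p := 2) 5 a) ^ 4 = 0 := by
      have := congrArg (PadicInt.toZModPow (p := 2) 5) hab
      simpa [map_add, map_mul, map_pow, map_ofNat, map_natCast] using this
    have hr : ((p + q : ℕ) : ZMod (2 ^ 5)) = ((2 * (p % 32) + 2 : ℕ) : ZMod 32) := by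
      have : ((p % 32 : ℕ) : ZMod 32) = ((p : ℕ) : ZMod 32) := ZMod.natCast_mod p 32
      push_cast [hpq]
      push_cast at this
      rw [this]
      ring
    rw [hr] at h32
    have hlt : p % 32 < 32 := Nat.mod_lt _ (by norm_num)
    have h2 : (p % 32) % 2 = 1 := by
      rw [Nat.mod_mod_of_dvd p (by norm_num)]
      exact Nat.odd_iff.mp hpo
    have h8 : (p % 32) % 8 ≠ 5 := by
      rw [Nat.mod_mod_of_dvd p (by norm_num)]
      exact hne
    exact core32 ⟨p % 32, hlt⟩ h2 h8 (PadicInt.toZModPow (p := 2) 5 a)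
      (PadicInt.toZModPow (p := 2) 5 b) h32
  · intro h5
    -- q ≡ 7 mod 8, so -q is a square of a 2-adic unit: use Hensel's lemma
    have hq8 : (q + 1) % 8 = 0 := by omega
    have hdvd : (8 : ℤ) ∣ (q + 1 : ℤ) := by
      have : (8 : ℕ) ∣ q + 1 := Nat.dvd_of_mod_eq_zero hq8
      exact_mod_cast this
    set F : Polynomial ℤ_[2] := Polynomial.X ^ 2 + Polynomial.C (q : ℤ_[2]) with hF
    have hevalF : ∀ x : ℤ_[2], F.eval x = x ^ 2 + (q : ℤ_[2]) := by
      intro x; simp [hF]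
    have hderiv : F.derivative.eval 1 = 2 := by
      simp [hF, Polynomial.derivative_X_pow]
      norm_num
    have hnorm2 : ‖(2 : ℤ_[2])‖ = 2⁻¹ := by
      have := PadicInt.norm_p (p := 2)
      simpa using this
    have hnormF : ‖F.eval 1‖ < ‖F.derivative.eval 1‖ ^ 2 := by
      rw [hderiv, hnorm2, hevalF]
      have h1q : (1 : ℤ_[2]) ^ 2 + (q : ℤ_[2]) = (q : ℤ_[2]) + 1 := by ring
      rw [h1q]
      have hle := (PadicInt.norm_int_le_pow_iff_dvd (p := 2) (k := (q : ℤ) + 1)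
        (n := 3)).mpr (by exact_mod_cast hdvd)
      calc ‖((q : ℤ_[2]) + 1 : ℤ_[2])‖ = ‖(((q : ℤ) + 1 : ℤ) : ℤ_[2])‖ := by push_cast; ring_nf
        _ ≤ ((2 : ℕ) : ℝ) ^ (-(3 : ℕ) : ℤ) := hle
        _ < (2 : ℝ)⁻¹ ^ 2 := by norm_num
    obtain ⟨t, ht, -⟩ := hensels_lemma hnormF
    rw [Polynomial.coe_aeval_eq_eval, hevalF] at ht
    have ht' : ((t : ℚ_[2])) ^ 2 + (q : ℚ_[2]) = 0 := by
      have : ((t ^ 2 + (q : ℤ_[2]) : ℤ_[2]) : ℚ_[2]) = 0 := by rw [ht]; simp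
      push_cast at this
      exact this
    refine ⟨1, 2 * (t : ℚ_[2]), ?_⟩
    have hq' : (q : ℚ_[2]) = (p : ℚ_[2]) + 2 := by
      rw [hpq]; push_cast; ring
    rw [hq']
    rw [hq'] at ht'
    ring_nf
    ring_nf at ht'
    linear_combination 4 * ht'
end

section
/- Let p and q be odd prime numbers with q = p + 2, assume p ≡ 5 (mod 8) and that -7 is a quadratic non-residue modulo p. Let L be a field equipped with a ℚ_p-algebra structure and let α ∈ L satisfy α² = -7. Then there exist z, w ∈ L such that w² + 2 + 2(p+q)z² + 2z⁴ = 0. -/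
/-- A nonzero square mod `p` lifts, via Hensel's lemma, to a square in `ℚ_[p]`
(for `p` odd). -/
lemma aux_sq_lift (p : ℕ) [Fact p.Prime] (hp2 : p ≠ 2) (a : ℤ) (b : ZMod p)
    (hb : b * b = (a : ZMod p)) (hb0 : b ≠ 0) :
    ∃ t : ℚ_[p], t ^ 2 = (a : ℚ_[p]) := by
  classical
  set F : Polynomial ℤ_[p] := Polynomial.X ^ 2 - Polynomial.C (a : ℤ_[p]) with hF
  set a₀ : ℤ_[p] := ((b.val : ℕ) : ℤ_[p]) with ha₀
  have htoZ : PadicInt.toZMod a₀ = b := by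
    simp [ha₀, map_natCast, ZMod.natCast_val, ZMod.cast_id]
  -- key fact : toZMod x = 0 ↔ p ∣ x
  have hker : ∀ x : ℤ_[p], PadicInt.toZMod x = 0 ↔ (p : ℤ_[p]) ∣ x := by
    intro x
    rw [← RingHom.mem_ker, PadicInt.ker_toZMod, PadicInt.maximalIdeal_eq_span_p,
      Ideal.mem_span_singleton]
  have hderiv : Polynomial.derivative F = Polynomial.C 2 * Polynomial.X := by
    simp [hF, Polynomial.derivative_pow]
  have hdeval : (Polynomial.derivative F).eval a₀ = 2 * a₀ := by
    simp [hderiv]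
  have h2a : ‖(2 : ℤ_[p]) * a₀‖ = 1 := by
    have hle : ‖(2 : ℤ_[p]) * a₀‖ ≤ 1 := PadicInt.norm_le_one _
    rcases lt_or_eq_of_le hle with h | h
    · exfalso
      have hdvd : (p : ℤ_[p]) ∣ 2 * a₀ := (PadicInt.norm_lt_one_iff_dvd _).mp h
      have : PadicInt.toZMod ((2 : ℤ_[p]) * a₀) = 0 := (hker _).mpr hdvd
      rw [map_mul, htoZ, map_ofNat] at this
      have h2 : (2 : ZMod p) ≠ 0 := by
        have : ¬ (p : ℤ) ∣ 2 := by
          intro hd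
          have : p ∣ 2 := by exact_mod_cast hd
          have := (Nat.prime_dvd_prime_iff_eq Fact.out Nat.prime_two).mp this
          exact hp2 this
        intro h0
        apply this
        exact_mod_cast (ZMod.intCast_zmod_eq_zero_iff_dvd 2 p).mp (by exact_mod_cast h0)
      exact (mul_ne_zero h2 hb0) this
    · exact h
  have heval : ‖F.eval a₀‖ < 1 := by
    rw [PadicInt.norm_lt_one_iff_dvd, ← hker]
    have : F.eval a₀ = a₀ ^ 2 - (a : ℤ_[p]) := by simp [hF]
    rw [this, map_sub, map_pow, htoZ, map_intCast, ← hb]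
    ring
  have hnorm : ‖F.eval a₀‖ < ‖(Polynomial.derivative F).eval a₀‖ ^ 2 := by
    rw [hdeval, h2a]
    simpa using heval
  obtain ⟨z, hz, -⟩ := hensels_lemma hnorm
  refine ⟨(z : ℚ_[p]), ?_⟩
  have hz2 : z ^ 2 = (a : ℤ_[p]) := by
    have : z ^ 2 - (a : ℤ_[p]) = 0 := by simpa [hF] using hz
    exact sub_eq_zero.mp this
  have : ((z ^ 2 : ℤ_[p]) : ℚ_[p]) = ((a : ℤ_[p]) : ℚ_[p]) := by rw [hz2]
  push_cast at this
  exact this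

/-- Let `p` and `q` be odd primes with `q = p + 2`, `p ≡ 5 (mod 8)` and `-7` a quadratic
non-residue modulo `p`. Let `L` be a field which is a `ℚ_p`-algebra and `α ∈ L` with
`α² = -7`. Then there exist `z, w ∈ L` with `w² + 2 + 2(p+q)z² + 2z⁴ = 0`. -/
theorem stmt_2 (p q : ℕ) [Fact p.Prime] (hq : q.Prime) (hpo : Odd p) (hqo : Odd q)
    (hpq : q = p + 2) (hp5 : p % 8 = 5) (hnr : legendreSym p (-7) = -1)
    (L : Type*) [Field L] [Algebra ℚ_[p] L] (α : L) (hα : α ^ 2 = -7) :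
    ∃ z w : L, w ^ 2 + 2 + 2 * ((p : L) + (q : L)) * z ^ 2 + 2 * z ^ 4 = 0 := by
  have hp := (Fact.out : p.Prime)
  have hp2 : p ≠ 2 := by omega
  have hp7 : p ≠ 7 := by omega
  -- legendre symbol of 2 is -1
  have h2 : legendreSym p 2 = -1 := by
    rw [legendreSym.at_two hp2, ZMod.χ₈_nat_mod_eight, hp5]
    decide
  -- legendre symbol of 7 is -1
  have h7 : legendreSym p 7 = -1 := by
    have hm1 : legendreSym p (-1) = 1 := by
      rw [legendreSym.at_neg_one hp2, ZMod.χ₄_nat_mod_four]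
      have : p % 4 = 1 := by omega
      rw [this]; decide
    have : legendreSym p (-7) = legendreSym p (-1) * legendreSym p 7 := by
      rw [← legendreSym.mul]; norm_num
    rw [this, hm1, one_mul] at hnr
    exact hnr
  -- hence 14 is a QR mod p
  have h14 : legendreSym p 14 = 1 := by
    have : legendreSym p 14 = legendreSym p 2 * legendreSym p 7 := by
      rw [← legendreSym.mul]; norm_num
    rw [this, h2, h7]; norm_num
  have h14ne : ((14 : ℤ) : ZMod p) ≠ 0 := by
    intro h0
    have hd : (p : ℤ) ∣ 14 := (ZMod.intCast_zmod_eq_zero_iff_dvd 14 p).mp h0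
    have hd' : p ∣ 14 := by exact_mod_cast hd
    have h27 : p ∣ 2 * 7 := by norm_num at hd' ⊢; exact hd'
    rcases (Nat.Prime.dvd_mul hp).mp h27 with h | h
    · exact hp2 ((Nat.prime_dvd_prime_iff_eq hp Nat.prime_two).mp h)
    · exact hp7 ((Nat.prime_dvd_prime_iff_eq hp (by norm_num)).mp h)
  obtain ⟨b, hb⟩ := (legendreSym.eq_one_iff p h14ne).mp h14
  have hb0 : b ≠ 0 := by
    intro h0; rw [h0, mul_zero] at hb; exact h14ne hb
  obtain ⟨t, ht⟩ := aux_sq_lift p hp2 14 b hb.symm hb0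
  haveI : CharZero L := charZero_of_injective_algebraMap (algebraMap ℚ_[p] L).injective
  refine ⟨0, α * algebraMap ℚ_[p] L (t / 7), ?_⟩
  have hw : (α * algebraMap ℚ_[p] L (t / 7)) ^ 2 = -2 := by
    rw [mul_pow, hα, ← map_pow]
    have : (t / 7) ^ 2 = (2 / 7 : ℚ_[p]) := by
      rw [div_pow, ht]; norm_num
    rw [this, map_div₀]
    have h2L : algebraMap ℚ_[p] L 2 = 2 := by rw [map_ofNat]
    have h7L : algebraMap ℚ_[p] L 7 = 7 := by rw [map_ofNat]
    rw [h2L, h7L]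
    have : (7 : L) ≠ 0 := by norm_num
    field_simp
  rw [hw]
  ring
end

section
/- Let p and q be odd prime numbers with q = p + 2 such that the Legendre symbols satisfy (-7/p) = (-7/q) = -1. Let α ∈ ℚ₂ satisfy α² = -7 and have 2-adic valuation v₂(1+α) = 2, and set π = -(1+α)/2 (so v₂(π) = 1). Then there exist z, w ∈ ℚ₂ with w² = π - 2(p+q)z² + (4/π)z⁴ if and only if p ≡ 31 (mod 56). -/
open Padic
set_option maxHeartbeats 1000000

instance : Fact (Nat.Prime 7) := ⟨by norm_num⟩

lemma qnorm_odd (k : ℤ) (hk : k % 2 = 1) : ‖(k : ℚ_[2])‖ = 1 := by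
  refine le_antisymm (Padic.norm_int_le_one k) ?_
  by_contra h
  push_neg at h
  have := (Padic.norm_intCast_lt_one_iff (k := k)).mp h
  omega

lemma qnorm_two : ‖(2:ℚ_[2])‖ = 2⁻¹ := by
  rw [show (2:ℚ_[2]) = ((2:ℕ):ℚ_[2]) by norm_num, Padic.norm_p]
  norm_num

lemma qnorm_int_le (k : ℤ) (n : ℕ) (h : (2:ℤ)^n ∣ k) : ‖(k : ℚ_[2])‖ ≤ ((2:ℝ)^n)⁻¹ := by
  have := (Padic.norm_int_le_pow_iff_dvd (p := 2) k n).mpr (by exact_mod_cast h)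
  refine le_trans this (le_of_eq ?_)
  rw [zpow_neg, zpow_natCast]
  norm_num

lemma qnorm_int_ge (k : ℤ) (n : ℕ) (h : ¬ ((2:ℤ)^(n+1) ∣ k)) :
    ¬ (‖(k : ℚ_[2])‖ ≤ ((2:ℝ)^(n+1))⁻¹) := by
  intro hle
  apply h
  have h2 : ((2:ℝ)^(n+1))⁻¹ = (2:ℝ)^(-((n+1:ℕ)):ℤ) := by
    rw [zpow_neg, zpow_natCast]
  rw [h2] at hle
  exact_mod_cast (Padic.norm_int_le_pow_iff_dvd (p := 2) k (n+1)).mp (by exact_mod_cast hle)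

lemma padd {a b : ℚ_[2]} {r : ℝ} (ha : ‖a‖ ≤ r) (hb : ‖b‖ ≤ r) : ‖a + b‖ ≤ r :=
  le_trans (Padic.nonarchimedean a b) (max_le ha hb)

lemma psub {a b : ℚ_[2]} {r : ℝ} (ha : ‖a‖ ≤ r) (hb : ‖b‖ ≤ r) : ‖a - b‖ ≤ r := by
  rw [sub_eq_add_neg]
  exact padd ha (by rwa [norm_neg])

lemma pdom {a b : ℚ_[2]} (h : ‖b‖ < ‖a‖) : ‖a + b‖ = ‖a‖ := by
  rw [Padic.add_eq_max_of_ne (ne_of_gt h), max_eq_left h.le]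

lemma sq_norm_ne (x : ℚ_[2]) {n : ℤ} (hn : Odd n) : ‖x‖ ^ 2 ≠ (2:ℝ) ^ n := by
  intro h
  rcases eq_or_ne x 0 with rfl | hx
  · simp at h
    exact (zpow_ne_zero n (by norm_num : (2:ℝ) ≠ 0)) h.symm
  · rw [Padic.norm_eq_zpow_neg_valuation hx, ← zpow_natCast, ← zpow_mul] at h
    have := (zpow_right_inj₀ (by norm_num : (0:ℝ) < 2) (by norm_num)).mp (by exact_mod_cast h)
    obtain ⟨k, rfl⟩ := hn
    omega

lemma unit_sq (z : ℚ_[2]) (hz : ‖z‖ = 1) : ‖z ^ 2 - 1‖ ≤ 8⁻¹ := by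
  set Z : ℤ_[2] := ⟨z, le_of_eq hz⟩ with hZ
  have hu : IsUnit Z := PadicInt.isUnit_iff.mpr hz
  have h8 : ∀ u : ZMod 8, IsUnit u → u ^ 2 - 1 = 0 := by decide
  have hmap : (PadicInt.toZModPow 3) (Z ^ 2 - 1) = 0 := by
    rw [map_sub, map_pow, map_one]
    exact h8 _ (hu.map _)
  have hker : Z ^ 2 - 1 ∈ RingHom.ker (PadicInt.toZModPow (p := 2) 3) := hmap
  rw [PadicInt.ker_toZModPow] at hker
  have hle := (PadicInt.norm_le_pow_iff_mem_span_pow (Z ^ 2 - 1) 3).mpr hker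
  have heq : ‖Z ^ 2 - 1‖ = ‖z ^ 2 - 1‖ := by
    rw [PadicInt.norm_def]
    congr 1
  rw [heq] at hle
  refine le_trans hle ?_
  norm_num

lemma sq_exists (c : ℚ_[2]) (hc : ‖c - 1‖ ≤ 8⁻¹) : ∃ r : ℚ_[2], r ^ 2 = c := by
  have hcle : ‖c‖ ≤ 1 := by
    have h1 : c = 1 + (c - 1) := by ring
    calc ‖c‖ = ‖1 + (c - 1)‖ := by rw [← h1]
    _ ≤ max ‖(1:ℚ_[2])‖ ‖c - 1‖ := Padic.nonarchimedean _ _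
    _ ≤ 1 := by rw [norm_one, max_le_iff]; refine ⟨le_refl _, by linarith⟩
  set C : ℤ_[2] := ⟨c, hcle⟩ with hC
  set F : Polynomial ℤ_[2] := Polynomial.X ^ 2 - Polynomial.C C with hF
  have hev1 : F.eval 1 = 1 - C := by
    rw [hF]; simp
  have hder : F.derivative = Polynomial.C 2 * Polynomial.X := by
    rw [hF]
    simp [Polynomial.derivative_X_pow]
    rw [one_add_one_eq_two, map_ofNat]
  have hevd : F.derivative.eval 1 = 2 := by rw [hder]; simp
  have hn1 : ‖F.eval 1‖ ≤ 8⁻¹ := by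
    rw [hev1, PadicInt.norm_def]
    have : ((1 - C : ℤ_[2]) : ℚ_[2]) = -(c - 1) := by show (1:ℚ_[2]) - c = -(c - 1); ring
    rw [this, norm_neg]
    exact hc
  have hn2 : ‖F.derivative.eval 1‖ = 2⁻¹ := by
    rw [hevd]
    have : (2 : ℤ_[2]) = ((2:ℕ) : ℤ_[2]) := by norm_num
    rw [this, PadicInt.norm_p]
    norm_num
  have key : ‖F.eval 1‖ < ‖F.derivative.eval 1‖ ^ 2 := by
    rw [hn2]; refine lt_of_le_of_lt hn1 (by norm_num)
  obtain ⟨R, hR, -⟩ := hensels_lemma key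
  have hR2 : R ^ 2 = C := by
    rw [hF] at hR
    simp only [Polynomial.coe_aeval_eq_eval, Polynomial.eval_sub, Polynomial.eval_pow, Polynomial.eval_X,
      Polynomial.eval_C, sub_eq_zero] at hR
    exact hR
  refine ⟨(R : ℚ_[2]), ?_⟩
  calc ((R : ℚ_[2])) ^ 2 = ((R ^ 2 : ℤ_[2]) : ℚ_[2]) := by push_cast; ring
    _ = c := by rw [hR2]

lemma aux_seven (p : ℕ) [hp : Fact p.Prime] (hpo : Odd p) (h : legendreSym p (-7) = -1) :
    legendreSym 7 p = -1 := by
  have hp2 : p ≠ 2 := by rintro rfl; exact (by norm_num : ¬ Odd 2) hpo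
  have hmul : legendreSym p (-7) = legendreSym p (-1) * legendreSym p 7 := by
    rw [show (-7 : ℤ) = -1 * 7 by ring, legendreSym.mul]
  have hcast : ((7:ℕ) : ℤ) = (7:ℤ) := by norm_num
  rcases Nat.odd_mod_four_iff.mp (Nat.odd_iff.mp hpo) with h1 | h3
  · have hqr := legendreSym.quadratic_reciprocity_one_mod_four (p := p) (q := 7) h1 (by norm_num)
    rw [hqr, hcast]
    have hneg1 : legendreSym p (-1) = 1 := by
      rw [legendreSym.at_neg_one hp2, ZMod.χ₄_nat_eq_if_mod_four, h1, Nat.odd_iff.mp hpo]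
      norm_num
    rw [hmul, hneg1, one_mul] at h
    exact h
  · have hqr := legendreSym.quadratic_reciprocity_three_mod_four (p := p) (q := 7) h3 (by norm_num)
    rw [hqr, hcast]
    have hneg1 : legendreSym p (-1) = -1 := by
      rw [legendreSym.at_neg_one hp2, ZMod.χ₄_nat_eq_if_mod_four, h3, Nat.odd_iff.mp hpo]
      norm_num
    rw [hmul, hneg1] at h
    linarith

lemma aux_mod7 (p q : ℕ) [Fact p.Prime] [Fact q.Prime] (hpo : Odd p) (hqo : Odd q)
    (hpq : q = p + 2) (h1 : legendreSym p (-7) = -1) (h2 : legendreSym q (-7) = -1) :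
    p % 7 = 3 := by
  have l1 := aux_seven p hpo h1
  have l2 := aux_seven q hqo h2
  have s1 : ¬ IsSquare ((p : ℕ) : ZMod 7) := legendreSym.eq_neg_one_iff' (p := 7) |>.mp l1
  have s2 : ¬ IsSquare ((q : ℕ) : ZMod 7) := legendreSym.eq_neg_one_iff' (p := 7) |>.mp l2
  have hq7 : ((q : ℕ) : ZMod 7) = (p : ZMod 7) + 2 := by rw [hpq]; push_cast; ring
  rw [hq7] at s2
  have key : ∀ x : ZMod 7, ¬ IsSquare x → ¬ IsSquare (x + 2) → x = 3 := by decide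
  have hp3 : ((p : ℕ) : ZMod 7) = 3 := key _ s1 s2
  have := congrArg ZMod.val hp3
  rwa [ZMod.val_natCast] at this

/-- Let `p` and `q` be odd primes with `q = p + 2` and `(-7/p) = (-7/q) = -1`. Let
`α ∈ ℚ₂` with `α² = -7` and `v₂(1+α) = 2`, and set `π = -(1+α)/2`. Then there exist
`z, w ∈ ℚ₂` with `w² = π - 2(p+q)z² + (4/π)z⁴` if and only if `p ≡ 31 (mod 56)`. -/
theorem stmt_4 (p q : ℕ) [Fact p.Prime] [Fact q.Prime] (hpo : Odd p) (hqo : Odd q)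
    (hpq : q = p + 2) (hA : legendreSym p (-7) = -1 ∧ legendreSym q (-7) = -1)
    (α : ℚ_[2]) (hα : α ^ 2 = -7) (hval : (1 + α).valuation = 2)
    (π : ℚ_[2]) (hπ : π = -(1 + α) / 2) :
    (∃ z w : ℚ_[2],
        w ^ 2 = π - 2 * ((p : ℚ_[2]) + (q : ℚ_[2])) * z ^ 2 + (4 / π) * z ^ 4) ↔
      p % 56 = 31 := by
  have hp2 : p % 2 = 1 := Nat.odd_iff.mp hpo
  have hp7 : p % 7 = 3 := aux_mod7 p q hpo hqo hpq hA.1 hA.2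
  -- basic 2-adic facts about α and π
  have h1α : (1:ℚ_[2]) + α ≠ 0 := by
    intro h
    have : α = -1 := by linear_combination h
    rw [this] at hα
    norm_num at hα
  have hn1α : ‖1 + α‖ = 4⁻¹ := by
    rw [Padic.norm_eq_zpow_neg_valuation h1α, hval]
    norm_num
  have ht4 : ‖α - 75‖ ≤ 4⁻¹ := by
    have h76 : α - 75 = (1 + α) - 76 := by ring
    rw [h76]
    refine psub (le_of_eq hn1α) ?_
    rw [show (76 : ℚ_[2]) = ((76:ℤ) : ℚ_[2]) by norm_num]
    refine le_trans (qnorm_int_le 76 2 (by norm_num)) (by norm_num)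
  have h150 : ‖α - 75 + 150‖ = 2⁻¹ := by
    have h150' : ‖(150 : ℚ_[2])‖ = 2⁻¹ := by
      rw [show (150:ℚ_[2]) = 2 * ((75:ℤ):ℚ_[2]) by norm_num, norm_mul, qnorm_two,
        qnorm_odd 75 (by norm_num)]
      norm_num
    rw [add_comm, pdom (by rw [h150']; linarith)]
    exact h150'
  have hkey : (α - 75) * ((α - 75) + 150) = -5632 := by linear_combination hα
  have h5632 : ‖(-5632 : ℚ_[2])‖ = (512:ℝ)⁻¹ := by
    rw [show (-5632:ℚ_[2]) = 2^9 * ((-11:ℤ):ℚ_[2]) by norm_num, norm_mul, norm_pow, qnorm_two,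
      qnorm_odd (-11) (by norm_num)]
    norm_num
  have hmul := congrArg (fun x : ℚ_[2] => ‖x‖) hkey
  simp only [norm_mul] at hmul
  rw [h150, h5632] at hmul
  have ht : ‖α - 75‖ = (256:ℝ)⁻¹ := by
    field_simp at hmul ⊢
    linarith
  have h74 : ‖(74:ℚ_[2])‖ = 2⁻¹ := by
    rw [show (74:ℚ_[2]) = 2 * ((37:ℤ):ℚ_[2]) by norm_num, norm_mul, qnorm_two,
      qnorm_odd 37 (by norm_num)]
    norm_num
  have hα1 : ‖α - 1‖ = 2⁻¹ := by
    have h74' : α - 1 = 74 + (α - 75) := by ring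
    rw [h74', pdom (by rw [ht, h74]; norm_num), h74]
  have hπ0 : π ≠ 0 := by
    rw [hπ]
    intro h
    rw [div_eq_zero_iff] at h
    rcases h with h | h
    · exact h1α (by linear_combination -h)
    · norm_num at h
  have hnπ : ‖π‖ = 2⁻¹ := by
    rw [hπ, norm_div, norm_neg, hn1α, qnorm_two]
    norm_num
  have hππ : π * (α - 1) = 4 := by
    rw [hπ]
    linear_combination (-(1:ℚ_[2])/2) * hα
  have h4π : 4 / π = α - 1 := by
    rw [div_eq_iff hπ0]
    linear_combination -hππ
  have h8q : ‖(8:ℚ_[2])‖ = 8⁻¹ := by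
    rw [show (8:ℚ_[2]) = 2^3 by norm_num, norm_pow, qnorm_two]
    norm_num
  have h4q : ‖(4:ℚ_[2])‖ = 4⁻¹ := by
    rw [show (4:ℚ_[2]) = 2^2 by norm_num, norm_pow, qnorm_two]
    norm_num
  have hP : ((p:ℚ_[2]) + (q:ℚ_[2])) = 2 * ((p+1:ℕ):ℚ_[2]) := by
    rw [hpq]; push_cast; ring
  have hcast : ((p+1:ℕ):ℚ_[2]) = ((((p:ℤ)+1 : ℤ)):ℚ_[2]) := by push_cast; ring
  have hPn : ‖((p+1:ℕ):ℚ_[2])‖ ≤ 2⁻¹ := by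
    rw [hcast]
    refine le_trans (qnorm_int_le ((p:ℤ)+1) 1 (by omega)) (by norm_num)
  have hpq4 : ‖(p:ℚ_[2]) + (q:ℚ_[2])‖ ≤ 4⁻¹ := by
    rw [hP, norm_mul, qnorm_two]
    nlinarith [norm_nonneg ((p+1:ℕ):ℚ_[2])]
  have hA1 : ‖(α-75)/8‖ ≤ 8⁻¹ := by
    rw [norm_div, ht, h8q]
    norm_num
  constructor
  · rintro ⟨z, w, hw⟩
    rw [h4π] at hw
    -- z must be a unit
    have hzn : ‖z‖ = 1 := by
      rcases eq_or_ne z 0 with rfl | hz0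
      · exfalso
        have hwn : ‖w‖^2 = (2:ℝ)^(-1:ℤ) := by
          have h0 : π - 2 * ((p:ℚ_[2]) + (q:ℚ_[2])) * 0 ^ 2 + (α-1) * 0 ^ 4 = π := by ring
          rw [← norm_pow, hw, h0, hnπ]
          norm_num
        exact sq_norm_ne w ⟨-1, by ring⟩ hwn
      · have hzv : ‖z‖ = (2:ℝ)^(-z.valuation) := by
          rw [Padic.norm_eq_zpow_neg_valuation hz0]; norm_num
        rcases lt_trichotomy z.valuation 0 with hk | hk | hk
        · exfalso
          have hz2 : (2:ℝ) ≤ ‖z‖ := by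
            rw [hzv]
            calc (2:ℝ) = 2^(1:ℤ) := by norm_num
            _ ≤ 2^(-z.valuation) := zpow_le_zpow_right₀ (by norm_num) (by omega)
          have hzpos : (0:ℝ) < ‖z‖ := by positivity
          have h4z : (4:ℝ) ≤ ‖z‖^2 := by nlinarith
          have h16z : (16:ℝ) ≤ ‖z‖^4 := by nlinarith [sq_nonneg (‖z‖^2 - 4)]
          have hz2nn : (0:ℝ) ≤ ‖z‖^2 := by positivity
          have he : w^2 = (α-1)*z^4 + (π - 2 * ((p:ℚ_[2]) + (q:ℚ_[2])) * z^2) := by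
            linear_combination hw
          have h1 : ‖π - 2 * ((p:ℚ_[2]) + (q:ℚ_[2])) * z^2‖ ≤ 32⁻¹ * ‖z‖^4 := by
            refine psub ?_ ?_
            · rw [hnπ]; linarith
            · rw [norm_mul, norm_mul, norm_pow, qnorm_two]
              have hstep : 2⁻¹ * ‖(p:ℚ_[2]) + (q:ℚ_[2])‖ * ‖z‖^2 ≤ 2⁻¹ * 4⁻¹ * ‖z‖^2 := by
                nlinarith [norm_nonneg ((p:ℚ_[2]) + (q:ℚ_[2]))]
              refine le_trans hstep ?_
              nlinarith [mul_nonneg hz2nn (by linarith : (0:ℝ) ≤ ‖z‖^2 - 4)]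
          have hdm : ‖(α-1)*z^4‖ = 2⁻¹ * ‖z‖^4 := by rw [norm_mul, norm_pow, hα1]
          have hwn : ‖w^2‖ = 2⁻¹ * ‖z‖^4 := by
            rw [he, pdom (by
              rw [hdm]
              refine lt_of_le_of_lt h1 (by nlinarith [pow_pos hzpos 4])), hdm]
          rw [norm_pow] at hwn
          refine sq_norm_ne w (n := -1 + -z.valuation * 4) ⟨-2*z.valuation - 1, by ring⟩ ?_
          rw [hwn, hzv, ← zpow_natCast ((2:ℝ)^(-z.valuation)), ← zpow_mul,
            zpow_add₀ (by norm_num : (2:ℝ) ≠ 0)]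
          norm_num
        · rw [hzv, hk]; norm_num
        · exfalso
          have hzs : ‖z‖ ≤ 2⁻¹ := by
            rw [hzv]
            calc (2:ℝ)^(-z.valuation) ≤ 2^(-1:ℤ) := zpow_le_zpow_right₀ (by norm_num) (by omega)
            _ = 2⁻¹ := by norm_num
          have he : w^2 = π + ((α-1)*z^4 - 2 * ((p:ℚ_[2]) + (q:ℚ_[2])) * z^2) := by
            linear_combination hw
          have hp4 : ‖z‖^4 ≤ (2⁻¹:ℝ)^4 := pow_le_pow_left₀ (norm_nonneg z) hzs 4
          have hp2' : ‖z‖^2 ≤ (2⁻¹:ℝ)^2 := pow_le_pow_left₀ (norm_nonneg z) hzs 2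
          have h1 : ‖(α-1)*z^4 - 2 * ((p:ℚ_[2]) + (q:ℚ_[2])) * z^2‖ ≤ 32⁻¹ := by
            refine psub ?_ ?_
            · rw [norm_mul, norm_pow, hα1]
              nlinarith
            · rw [norm_mul, norm_mul, norm_pow, qnorm_two]
              have hmm : ‖(p:ℚ_[2]) + (q:ℚ_[2])‖ * ‖z‖^2 ≤ 4⁻¹ * (2⁻¹:ℝ)^2 :=
                mul_le_mul hpq4 hp2' (by positivity) (by norm_num)
              nlinarith
          have hwn : ‖w^2‖ = 2⁻¹ := by
            rw [he, pdom (by rw [hnπ]; linarith), hnπ]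
          rw [norm_pow] at hwn
          refine sq_norm_ne w (n := -1) ⟨-1, by ring⟩ ?_
          rw [hwn]; norm_num
    -- main computation
    rw [hπ, hP] at hw
    have hz2u : ‖z^2 - 1‖ ≤ 8⁻¹ := unit_sq z hzn
    have hz2p : ‖z^2 + 1‖ ≤ 2⁻¹ := by
      have hh : z^2 + 1 = (z^2 - 1) + 2 := by ring
      rw [hh]
      exact padd (le_trans hz2u (by norm_num)) (le_of_eq qnorm_two)
    have hz4 : ‖z^4 - 1‖ ≤ 16⁻¹ := by
      have hh : z^4 - 1 = (z^2-1)*(z^2+1) := by ring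
      rw [hh, norm_mul]
      calc ‖z^2-1‖ * ‖z^2+1‖ ≤ 8⁻¹ * 2⁻¹ :=
        mul_le_mul hz2u hz2p (norm_nonneg _) (by norm_num)
      _ = 16⁻¹ := by norm_num
    have hA2 : ‖((α-1)/4)*(z^4-1)‖ ≤ 8⁻¹ := by
      rw [norm_mul, norm_div, hα1, h4q]
      calc 2⁻¹/4⁻¹ * ‖z^4-1‖ ≤ 2⁻¹/4⁻¹ * 16⁻¹ := by
            refine mul_le_mul_of_nonneg_left hz4 (by norm_num)
      _ ≤ 8⁻¹ := by norm_num
    have hc : (w/2)^2 = 9 + (α-75)/8 + ((α-1)/4)*(z^4-1) - ((p+1:ℕ):ℚ_[2])*z^2 := by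
      linear_combination (1/4 : ℚ_[2]) * hw
    have hcm1 : (w/2)^2 - 1 = 8 + ((α-75)/8 + ((α-1)/4)*(z^4-1)) - ((p+1:ℕ):ℚ_[2])*z^2 := by
      linear_combination hc
    have hsmall : ‖(8:ℚ_[2]) + ((α-75)/8 + ((α-1)/4)*(z^4-1))‖ ≤ 8⁻¹ :=
      padd (le_of_eq h8q) (padd hA1 hA2)
    have hPz : ‖((p+1:ℕ):ℚ_[2])*z^2‖ ≤ 2⁻¹ := by
      rw [norm_mul, norm_pow, hzn]
      simpa using hPn
    have hwnorm : ‖(w/2)^2 - 1‖ ≤ 2⁻¹ := by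
      rw [hcm1]
      exact psub (le_trans hsmall (by norm_num)) hPz
    have hw1 : ‖w/2‖ = 1 := by
      have hone : ‖(w/2)^2‖ = 1 := by
        have hh : (w/2)^2 = 1 + ((w/2)^2 - 1) := by ring
        rw [hh, pdom (by rw [norm_one]; linarith), norm_one]
      rw [norm_pow] at hone
      nlinarith [norm_nonneg (w/2)]
    have hcu := unit_sq (w/2) hw1
    have hfin : ((p+1:ℕ):ℚ_[2])*z^2 =
        8 + ((α-75)/8 + ((α-1)/4)*(z^4-1)) - ((w/2)^2 - 1) := by
      linear_combination hcm1
    have hPz8 : ‖((p+1:ℕ):ℚ_[2])*z^2‖ ≤ 8⁻¹ := by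
      rw [hfin]
      exact psub hsmall hcu
    have hPle : ‖((p+1:ℕ):ℚ_[2])‖ ≤ 8⁻¹ := by
      rw [norm_mul, norm_pow, hzn] at hPz8
      simpa using hPz8
    have hdvd : (2:ℤ)^3 ∣ ((p:ℤ)+1) := by
      by_contra hnd
      refine (qnorm_int_ge ((p:ℤ)+1) 2 (by exact_mod_cast hnd)) ?_
      rw [← hcast]
      refine le_trans hPle (by norm_num)
    omega
  · intro h56
    have hdvd : (2:ℤ)^3 ∣ ((p:ℤ)+1) := by omega
    have hPle : ‖((p+1:ℕ):ℚ_[2])‖ ≤ 8⁻¹ := by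
      rw [hcast]
      refine le_trans (qnorm_int_le ((p:ℤ)+1) 3 hdvd) (by norm_num)
    have hcnorm : ‖(9 + (α-75)/8 - ((p+1:ℕ):ℚ_[2])) - 1‖ ≤ 8⁻¹ := by
      have hh : (9 + (α-75)/8 - ((p+1:ℕ):ℚ_[2])) - 1 = (8 + (α-75)/8) - ((p+1:ℕ):ℚ_[2]) := by
        ring
      rw [hh]
      exact psub (padd (le_of_eq h8q) hA1) hPle
    obtain ⟨r, hr⟩ := sq_exists _ hcnorm
    refine ⟨1, 2*r, ?_⟩
    rw [h4π, hπ, hP]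
    linear_combination (4:ℚ_[2]) * hr
end

section
/- Let p and q be odd prime numbers with q = p + 2 such that the Legendre symbols satisfy (-7/p) = (-7/q) = -1, and assume p ≡ 17 or 31 (mod 56). Let L be a field equipped with a ℚ_p-algebra structure, let α ∈ L satisfy α² = -7, and set π = -(1+α)/2. Then there exist z, w ∈ L such that w² = π - 2(p+q)z² + (4/π)z⁴. -/
open Polynomial PadicInt in
lemma hensel_root {p : ℕ} [Fact p.Prime] (F : Polynomial ℤ_[p]) (b : ℤ_[p])
    (h0 : toZMod (F.eval b) = 0) (h1 : toZMod (F.derivative.eval b) ≠ 0) :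
    ∃ z : ℤ_[p], F.eval z = 0 := by
  have hm : ∀ x : ℤ_[p], toZMod x = 0 ↔ ‖x‖ < 1 := by
    intro x
    have : toZMod x = 0 ↔ x ∈ RingHom.ker (toZMod : ℤ_[p] →+* ZMod p) :=
      RingHom.mem_ker.symm
    rw [this, ker_toZMod, maximalIdeal_eq_span_p,
      Ideal.mem_span_singleton, ← norm_lt_one_iff_dvd]
  have hd : ‖F.derivative.eval b‖ = 1 := by
    refine le_antisymm (norm_le_one _) ?_
    by_contra h
    exact h1 ((hm _).mpr (lt_of_not_ge h))
  have hnorm : ‖F.eval b‖ < ‖F.derivative.eval b‖ ^ 2 := by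
    rw [hd]; simpa using (hm _).mp h0
  obtain ⟨z, hz, -⟩ := hensels_lemma hnorm
  exact ⟨z, hz⟩

lemma modp_root {p : ℕ} [Fact p.Prime] (hp2 : (2 : ZMod p) ≠ 0) (hp7 : (7 : ZMod p) ≠ 0)
    (hs : ∃ s : ZMod p, s ^ 2 = 2) (h7 : ¬ IsSquare (-7 : ZMod p)) :
    ∃ u : ZMod p, u ≠ 0 ∧ 16 * (u^2)^2 + 8 * u^2 - 7 = 0 ∧ 4 * u^2 + 1 ≠ 0 := by
  obtain ⟨s, hs⟩ := hs
  have h4 : (4 : ZMod p) ≠ 0 := by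
    intro h; apply hp2; have : (4 : ZMod p) = 2 * 2 := by norm_num
    rcases mul_eq_zero.mp (this ▸ h) with h | h <;> exact h
  set t₁ : ZMod p := (-1 + 2*s)/4 with ht₁def
  set t₂ : ZMod p := (-1 - 2*s)/4 with ht₂def
  have e₁ : 16 * t₁^2 + 8 * t₁ - 7 = 0 := by
    rw [ht₁def]; field_simp; linear_combination (64:ZMod p) * hs
  have e₂ : 16 * t₂^2 + 8 * t₂ - 7 = 0 := by
    rw [ht₂def]; field_simp; linear_combination (64:ZMod p) * hs
  have hprod : 16 * (t₁ * t₂) = -7 := by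
    rw [ht₁def, ht₂def]; field_simp; linear_combination (-64:ZMod p) * hs
  have h16 : (16 : ZMod p) ≠ 0 := by
    intro h; apply h4; have : (16 : ZMod p) = 4 * 4 := by norm_num
    rcases mul_eq_zero.mp (this ▸ h) with h | h <;> exact h
  have hprodne : t₁ * t₂ ≠ 0 := by
    intro h; rw [h, mul_zero] at hprod; exact hp7 (by rw [← neg_neg (7 : ZMod p), ← hprod]; ring)
  have ht₁0 : t₁ ≠ 0 := fun h => hprodne (by rw [h, zero_mul])
  have ht₂0 : t₂ ≠ 0 := fun h => hprodne (by rw [h, mul_zero])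
  -- one of t₁, t₂ is a square
  have hsq : IsSquare t₁ ∨ IsSquare t₂ := by
    by_contra h
    push_neg at h
    have c₁ := quadraticChar_neg_one_iff_not_isSquare.mpr h.1
    have c₂ := quadraticChar_neg_one_iff_not_isSquare.mpr h.2
    have : quadraticChar (ZMod p) (t₁ * t₂) = 1 := by
      rw [map_mul, c₁, c₂]; ring
    have hsq7 : IsSquare (t₁ * t₂) :=
      (quadraticChar_one_iff_isSquare hprodne).mp this
    apply h7
    obtain ⟨r, hr⟩ := hsq7
    exact ⟨4 * r, by rw [← hprod, hr]; ring⟩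
  have key : ∀ t : ZMod p, 16 * t^2 + 8*t - 7 = 0 → IsSquare t →
      ∃ u : ZMod p, u ≠ 0 ∧ 16 * (u^2)^2 + 8 * u^2 - 7 = 0 ∧ 4 * u^2 + 1 ≠ 0 := by
    intro t ht ⟨u, hu⟩
    have hu2 : u^2 = t := by rw [hu]; ring
    have ht0 : t ≠ 0 := by
      intro h; rw [h] at ht; apply hp7
      have : (7 : ZMod p) = -(16 * 0^2 + 8*0 - 7) := by ring
      rw [this, ht, neg_zero]
    refine ⟨u, fun h => ht0 (by rw [← hu2, h]; ring), by rw [hu2]; exact ht, ?_⟩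
    rw [hu2]
    intro h
    have h8 : (8 : ZMod p) = 0 := by
      have : (8 : ZMod p) = (4*t+1)^2 - (16 * t^2 + 8*t - 7) := by ring
      rw [this, h, ht]; ring
    apply hp2
    have : (8 : ZMod p) = 2 * 4 := by norm_num
    rcases mul_eq_zero.mp (this ▸ h8) with h | h
    · exact h
    · exact absurd h h4
  rcases hsq with h | h
  · exact key t₁ e₁ h
  · exact key t₂ e₂ h

open Polynomial PadicInt

/-- Let `p` and `q` be odd primes with `q = p + 2`, `(-7/p) = (-7/q) = -1`, and
`p ≡ 17` or `31 (mod 56)`. Let `L` be a field which is a `ℚ_p`-algebra, `α ∈ L` with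
`α² = -7`, and set `π = -(1+α)/2`. Then there exist `z, w ∈ L` with
`w² = π - 2(p+q)z² + (4/π)z⁴`. -/
theorem stmt_5 (p q : ℕ) [Fact p.Prime] [Fact q.Prime] (hpo : Odd p) (hqo : Odd q)
    (hpq : q = p + 2) (hA : legendreSym p (-7) = -1 ∧ legendreSym q (-7) = -1)
    (hmod : p % 56 = 17 ∨ p % 56 = 31)
    (L : Type*) [Field L] [Algebra ℚ_[p] L] (α : L) (hα : α ^ 2 = -7)
    (π : L) (hπ : π = -(1 + α) / 2) :
    ∃ z w : L, w ^ 2 = π - 2 * ((p : L) + (q : L)) * z ^ 2 + (4 / π) * z ^ 4 := by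
  have hp2 : p ≠ 2 := by rcases hmod with h | h <;> omega
  have hp7 : p ≠ 7 := by rcases hmod with h | h <;> omega
  have hz2 : (2 : ZMod p) ≠ 0 := by
    have : ((2 : ℕ) : ZMod p) ≠ 0 := by
      rw [Ne, ZMod.natCast_eq_zero_iff]
      intro h
      exact hp2 ((Nat.prime_dvd_prime_iff_eq Fact.out Nat.prime_two).mp h)
    exact_mod_cast this
  have hz7 : (7 : ZMod p) ≠ 0 := by
    have : ((7 : ℕ) : ZMod p) ≠ 0 := by
      rw [Ne, ZMod.natCast_eq_zero_iff]
      intro h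
      exact hp7 ((Nat.prime_dvd_prime_iff_eq Fact.out (by norm_num)).mp h)
    exact_mod_cast this
  have hsq2 : ∃ s : ZMod p, s ^ 2 = 2 := by
    have h8 : p % 8 = 1 ∨ p % 8 = 7 := by
      have := Nat.mod_mod_of_dvd p (by norm_num : 8 ∣ 56)
      rcases hmod with h | h <;> rw [h] at this <;> omega
    obtain ⟨r, hr⟩ := (ZMod.exists_sq_eq_two_iff hp2).mpr h8
    exact ⟨r, by rw [hr]; ring⟩
  have h7 : ¬ IsSquare (-7 : ZMod p) := by
    have := (legendreSym.eq_neg_one_iff p).mp hA.1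
    intro hc; apply this; push_cast; exact hc
  obtain ⟨u₀, hu0, hurel, hu41⟩ := modp_root hz2 hz7 hsq2 h7
  -- Hensel lifting
  set F : Polynomial ℤ_[p] := C 16 * X ^ 4 + C 8 * X ^ 2 - C 7 with hF
  set b : ℤ_[p] := (u₀.val : ℤ_[p]) with hb
  have hbz : toZMod b = u₀ := by
    rw [hb, map_natCast]; exact ZMod.natCast_rightInverse u₀
  have hevF : ∀ x : ℤ_[p], F.eval x = 16 * x ^ 4 + 8 * x ^ 2 - 7 := by
    intro x; simp [hF]
  have hdF : ∀ x : ℤ_[p], F.derivative.eval x = 64 * x ^ 3 + 16 * x := by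
    intro x
    rw [hF]
    simp [derivative_sub, derivative_add, derivative_C_mul, derivative_X_pow]
    ring
  have h16 : (16 : ZMod p) ≠ 0 := by
    intro h; apply hz2
    have h2 : (16 : ZMod p) = 2 * (2 * (2 * 2)) := by norm_num
    rw [h2] at h
    rcases mul_eq_zero.mp h with h | h; · exact h
    rcases mul_eq_zero.mp h with h | h; · exact h
    rcases mul_eq_zero.mp h with h | h; · exact h
    · exact h
  have h0 : toZMod (F.eval b) = 0 := by
    rw [hevF]
    simp only [map_sub, map_add, map_mul, map_pow, map_ofNat, hbz]
    linear_combination hurel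
  have h1 : toZMod (F.derivative.eval b) ≠ 0 := by
    rw [hdF]
    simp only [map_add, map_mul, map_pow, map_ofNat, hbz]
    have : (64 : ZMod p) * u₀ ^ 3 + 16 * u₀ = 16 * u₀ * (4 * u₀ ^ 2 + 1) := by ring
    rw [this]
    exact mul_ne_zero (mul_ne_zero h16 hu0) hu41
  obtain ⟨z₀, hz₀⟩ := hensel_root F b h0 h1
  rw [hevF] at hz₀
  -- move to ℚ_[p]
  have hq : (16 : ℚ_[p]) * (z₀ : ℚ_[p]) ^ 4 + 8 * (z₀ : ℚ_[p]) ^ 2 - 7 = 0 := by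
    have := congrArg (fun x : ℤ_[p] => (x : ℚ_[p])) hz₀
    push_cast at this
    exact this
  -- move to L
  set U : L := algebraMap ℚ_[p] L (z₀ : ℚ_[p]) with hU
  have hUrel : 16 * U ^ 4 + 8 * U ^ 2 - 7 = 0 := by
    have := congrArg (algebraMap ℚ_[p] L) hq
    simp only [map_sub, map_add, map_mul, map_pow, map_ofNat, map_zero] at this
    rw [hU]; exact this
  haveI : CharZero L := charZero_of_injective_algebraMap (algebraMap ℚ_[p] L).injective
  have hU0 : U ≠ 0 := by
    intro h
    rw [h] at hUrel
    norm_num at hUrel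
  refine ⟨0, U - α / (4 * U), ?_⟩
  have key : (4 * U ^ 2 - α) ^ 2 = -8 * U ^ 2 * (1 + α) := by
    linear_combination hα + hUrel
  have hw : U - α / (4 * U) = (4 * U ^ 2 - α) / (4 * U) := by
    field_simp
  rw [hw, div_pow, key, hπ]
  have h4U : (4 * U) ^ 2 = 16 * U ^ 2 := by ring
  rw [h4U]
  field_simp
  ring
end

section
/- Let D be one of -11, -19, -43, -67, -163, and let p and q be odd prime numbers with q = p + 2 such that the Legendre symbols satisfy (D/p) = (D/q) = -1. Let L be a field equipped with a ℚ_p-algebra structure and let α ∈ L satisfy α² = D. Then there exist z, w ∈ L with w² = 2 - 2(p+q)z² + 2z⁴. -/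
open Polynomial in
lemma padic_sq_lift {p : ℕ} [Fact p.Prime] (hp : p ≠ 2) {u : ℤ}
    (hu : ¬ (p : ℤ) ∣ u) (h : IsSquare ((u : ZMod p))) : ∃ x : ℚ_[p], x ^ 2 = (u : ℚ_[p]) := by
  obtain ⟨r, hr⟩ := h
  set a : ℤ := (r.val : ℤ) with ha_def
  have hcast : ((a : ZMod p)) = r := by
    simp [ha_def, ZMod.natCast_val, ZMod.intCast_cast, ZMod.cast_id]
  have hpa : ¬ (p : ℤ) ∣ a := by
    intro hdvd
    apply hu
    have h0 : ((a : ZMod p)) = 0 := (ZMod.intCast_zmod_eq_zero_iff_dvd a p).2 hdvd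
    have : ((u : ZMod p)) = 0 := by rw [hr, ← hcast, h0, mul_zero]
    exact (ZMod.intCast_zmod_eq_zero_iff_dvd u p).1 this
  set F : Polynomial ℤ_[p] := X ^ 2 - C (u : ℤ_[p]) with hF
  have hevala : F.eval (a : ℤ_[p]) = ((a ^ 2 - u : ℤ) : ℤ_[p]) := by
    simp [hF]
  have hderiv : F.derivative = C 2 * X := by
    simp [hF]
    rw [← C_1, ← C_add, one_add_one_eq_two]
  have hderiva : F.derivative.eval (a : ℤ_[p]) = ((2 * a : ℤ) : ℤ_[p]) := by
    rw [hderiv]; simp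
  have hdvd2 : (p : ℤ) ∣ a ^ 2 - u := by
    have : ((a ^ 2 - u : ℤ) : ZMod p) = 0 := by
      push_cast
      rw [hcast, hr]
      ring
    exact (ZMod.intCast_zmod_eq_zero_iff_dvd _ p).1 this
  have hnd : ¬ (p : ℤ) ∣ 2 * a := by
    rintro hdvd
    rcases (Int.Prime.dvd_mul' (Fact.out) hdvd) with h2 | h2
    · have h2' : (p : ℤ) ≤ 2 := Int.le_of_dvd (by norm_num) h2
      have hp3 : 2 ≤ p := (Fact.out : p.Prime).two_le
      omega
    · exact hpa h2
  have hnorm1 : ‖F.derivative.eval (a : ℤ_[p])‖ = 1 := by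
    rw [hderiva]
    rcases lt_or_eq_of_le (PadicInt.norm_le_one ((2 * a : ℤ) : ℤ_[p])) with hlt | heq
    · exact absurd ((PadicInt.norm_int_lt_one_iff_dvd _).1 hlt) hnd
    · exact heq
  have hnorm : ‖F.eval (a : ℤ_[p])‖ < ‖F.derivative.eval (a : ℤ_[p])‖ ^ 2 := by
    rw [hnorm1, one_pow, hevala]
    exact (PadicInt.norm_int_lt_one_iff_dvd _).2 hdvd2
  obtain ⟨z, hz, -⟩ := hensels_lemma hnorm
  have hz2 : z ^ 2 = (u : ℤ_[p]) := by
    have := hz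
    simp [hF] at this
    linear_combination this
  refine ⟨(z : ℚ_[p]), ?_⟩
  have := congrArg (PadicInt.Coe.ringHom (p := p)) hz2
  simp at this; exact this

/-- Let `D ∈ {-11, -19, -43, -67, -163}` and let `p, q` be odd primes with `q = p + 2` and
`(D/p) = (D/q) = -1`. Let `L` be a field which is a `ℚ_p`-algebra and `α ∈ L` with
`α² = D`. Then there exist `z, w ∈ L` with `w² = 2 - 2(p+q)z² + 2z⁴`. -/
theorem stmt_8 (D : ℤ) (hD : D = -11 ∨ D = -19 ∨ D = -43 ∨ D = -67 ∨ D = -163)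
    (p q : ℕ) [Fact p.Prime] [Fact q.Prime] (hpo : Odd p) (hqo : Odd q)
    (hpq : q = p + 2) (hB : legendreSym p D = -1 ∧ legendreSym q D = -1)
    (L : Type*) [Field L] [Algebra ℚ_[p] L] (α : L) (hα : α ^ 2 = (D : L)) :
    ∃ z w : L, w ^ 2 = 2 - 2 * ((p : L) + (q : L)) * z ^ 2 + 2 * z ^ 4 := by
  have hp2 : p ≠ 2 := by
    rintro rfl; rw [Nat.odd_iff] at hpo; omega
  have hchar : CharZero L := charZero_of_injective_algebraMap (algebraMap ℚ_[p] L).injective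
  have hpD : (D : ZMod p) ≠ 0 := by
    intro h0
    have := (legendreSym.eq_zero_iff p D).2 h0
    rw [hB.1] at this; norm_num at this
  -- it suffices to find a square root of 2 in L
  suffices hw : ∃ w : L, w ^ 2 = 2 by
    obtain ⟨w, hw⟩ := hw
    exact ⟨0, w, by rw [hw]; ring⟩
  by_cases h2 : IsSquare ((2 : ℤ) : ZMod p)
  · obtain ⟨x, hx⟩ := padic_sq_lift hp2 (by
      intro hdvd
      have h2' : (p : ℤ) ≤ 2 := Int.le_of_dvd (by norm_num) hdvd
      have hp3 : 2 ≤ p := (Fact.out : p.Prime).two_le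
      omega) h2
    refine ⟨algebraMap ℚ_[p] L x, ?_⟩
    rw [← map_pow, hx]
    push_cast
    exact map_ofNat _ 2
  · -- then 2*D is a square mod p
    have hl2 : legendreSym p 2 = -1 := (legendreSym.eq_neg_one_iff p).2 h2
    have hmul : legendreSym p (2 * D) = 1 := by
      rw [legendreSym.mul, hl2, hB.1]; ring
    have h2D0 : ((2 * D : ℤ) : ZMod p) ≠ 0 := by
      push_cast
      intro h0
      rcases mul_eq_zero.mp h0 with h | h
      · have h2c : ((2 : ℤ) : ZMod p) = 0 := by push_cast; exact h
        have hdd := (ZMod.intCast_zmod_eq_zero_iff_dvd 2 p).1 h2c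
        have h2' : (p : ℤ) ≤ 2 := Int.le_of_dvd (by norm_num) hdd
        have hp3 : 2 ≤ p := (Fact.out : p.Prime).two_le
        omega
      · exact hpD h
    have hsq : IsSquare (((2 * D : ℤ) : ZMod p)) := (legendreSym.eq_one_iff p h2D0).1 hmul
    obtain ⟨x, hx⟩ := padic_sq_lift hp2 (by
      intro hdvd
      exact h2D0 ((ZMod.intCast_zmod_eq_zero_iff_dvd _ p).2 hdvd)) hsq
    have hD0 : (D : L) ≠ 0 := by
      rcases hD with rfl | rfl | rfl | rfl | rfl <;> norm_num
    refine ⟨algebraMap ℚ_[p] L x * α / (D : L), ?_⟩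
    have hx' : (algebraMap ℚ_[p] L x) ^ 2 = ((2 * D : ℤ) : L) := by
      rw [← map_pow, hx, map_intCast]
    field_simp
    rw [hx', hα]
    push_cast
    ring
end

section
/- Let p and q be odd prime numbers with q = p + 2 and p ≡ 5 (mod 8). Let L be a field equipped with a ℚ₂-algebra structure such that L has dimension 2 as a ℚ₂-vector space, and let α ∈ L satisfy α² = -2. Then there are no z, w ∈ L with w² + 1 - (p+q)z² + z⁴ = 0. -/
lemma stmt10_norm_two_q2 : ‖(2 : ℚ_[2])‖ = 2⁻¹ := by
  have := @Padic.norm_p 2 _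
  push_cast at this ⊢
  simpa using this

lemma stmt10_no_sqrt_neg_two (r : ℚ_[2]) : r ^ 2 ≠ -2 := by
  intro h
  have hr : r ≠ 0 := by rintro rfl; norm_num at h
  have hv2 : ‖(-2 : ℚ_[2])‖ = (2:ℝ) ^ (-(1:ℤ)) := by
    rw [norm_neg, stmt10_norm_two_q2]; norm_num
  have hvr : ‖r‖ = (2:ℝ) ^ (-r.valuation) := Padic.norm_eq_zpow_neg_valuation hr
  have : ((2:ℝ) ^ (-r.valuation))^2 = (2:ℝ) ^ (-(1:ℤ)) := by
    rw [← hvr, ← hv2, ← h]; rw [norm_pow]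
  rw [← zpow_natCast ((2:ℝ) ^ (-r.valuation)) 2, ← zpow_mul] at this
  have := zpow_right_injective₀ (by norm_num : (0:ℝ) < 2) (by norm_num) this
  omega

lemma stmt10_norm_ne_q2 {x y : ℚ_[2]} (hx : x ≠ 0) (hy : y ≠ 0) : ‖x^2‖ ≠ ‖2*y^2‖ := by
  intro h
  rw [norm_mul, norm_pow, norm_pow, stmt10_norm_two_q2,
    Padic.norm_eq_zpow_neg_valuation hx, Padic.norm_eq_zpow_neg_valuation hy] at h
  simp only [Nat.cast_ofNat] at h
  rw [← zpow_natCast ((2:ℝ) ^ (-x.valuation)) 2, ← zpow_mul] at h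
  rw [← zpow_natCast ((2:ℝ) ^ (-y.valuation)) 2, ← zpow_mul] at h
  rw [show (2:ℝ)⁻¹ = (2:ℝ) ^ (-(1:ℤ)) by norm_num, ← zpow_add₀ (by norm_num : (2:ℝ) ≠ 0)] at h
  have := zpow_right_injective₀ (by norm_num : (0:ℝ) < 2) (by norm_num) h
  omega

/-- norm of x² + e y² where e = ±2 -/
lemma stmt10_norm_comb (x y e : ℚ_[2]) (he : e = 2 ∨ e = -2) :
    ‖x^2 + e*y^2‖ = max ‖x^2‖ ‖2*y^2‖ := by
  have hee : ‖e*y^2‖ = ‖2*y^2‖ := by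
    rcases he with rfl | rfl
    · rfl
    · rw [show (-2:ℚ_[2])*y^2 = -(2*y^2) by ring, norm_neg]
  by_cases hx : x = 0
  · subst hx; simp only [ne_eq, OfNat.ofNat_ne_zero, not_false_eq_true, zero_pow, zero_add,
      norm_zero, hee]
    rw [max_eq_right (norm_nonneg _)]
  by_cases hy : y = 0
  · subst hy; simp only [ne_eq, OfNat.ofNat_ne_zero, not_false_eq_true, zero_pow, mul_zero,
      add_zero, norm_zero]
    rw [max_eq_left (norm_nonneg _)]
  · rw [Padic.add_eq_max_of_ne (by rw [hee]; exact stmt10_norm_ne_q2 hx hy), hee]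

lemma stmt10_two_le_norm {x : ℚ_[2]} (h : 1 < ‖x‖) : 2 ≤ ‖x‖ := by
  have hx : x ≠ 0 := by rintro rfl; simp at h; linarith
  rw [Padic.norm_eq_zpow_neg_valuation hx] at h ⊢
  simp only [Nat.cast_ofNat] at h ⊢
  have h1 : (0:ℤ) < -x.valuation := by
    by_contra hc
    push_neg at hc
    have h2 : (2:ℝ) ^ (-x.valuation) ≤ (2:ℝ)^(0:ℤ) :=
      zpow_le_zpow_right₀ (by norm_num) hc
    rw [zpow_zero] at h2; linarith
  calc (2:ℝ) = (2:ℝ)^(1:ℤ) := by norm_num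
    _ ≤ (2:ℝ) ^ (-x.valuation) := zpow_le_zpow_right₀ (by norm_num) (by omega)

lemma stmt10_evenCase : ∀ x y u v : ZMod 8, x^2 - 2*y^2 + 1 = 4*u → x*y = 2*v → False := by
  decide

lemma stmt10_oddCase1 : ∀ c d t b m : ZMod 2,
    c^2 - 2*d^2 + 1 - 4*m*((2*t+1)^2 - 2*b^2) + ((2*t+1)^2-2*b^2)^2 - 8*(2*t+1)^2*b^2 = 0 →
    c = 0 := by decide

set_option maxRecDepth 10000 in
lemma stmt10_oddCase2 : ∀ d c₁ b t m : ZMod 8, (m = 3 ∨ m = 7) →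
    d^2 - 2*c₁^2 = -(2*m-1) + 2*(2*t^2+2*t-b^2)^2 - 2*(2*m-1)*(2*t^2+2*t-b^2) - 4*((2*t+1)*b)^2 →
    d*c₁ = (2*t+1)*b*(2*m - ((2*t+1)^2-2*b^2)) → False := by decide

lemma stmt10_dvd_of_toZModPow {n : ℕ} {x : ℤ_[2]} (h : PadicInt.toZModPow n x = 0) :
    (2:ℤ_[2])^n ∣ x := by
  have hk : x ∈ RingHom.ker (PadicInt.toZModPow (p := 2) n) := h
  rw [PadicInt.ker_toZModPow] at hk
  rw [Ideal.mem_span_singleton] at hk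
  exact_mod_cast hk

lemma stmt10_core (mp : ℕ) (hmp : mp % 4 = 3) (A B C D : ℤ_[2])
    (e1 : C^2 - 2*D^2 + 1 - 4*mp*(A^2-2*B^2) + (A^2-2*B^2)^2 - 8*A^2*B^2 = 0)
    (e2 : C*D = 2*A*B*(2*mp - (A^2-2*B^2))) : False := by
  have hpar : ∀ x : ℤ_[2], (2:ℤ_[2]) ∣ x ∨ (2:ℤ_[2]) ∣ (x - 1) := by
    intro x
    have h01 : ∀ r : ZMod 2, r = 0 ∨ r = 1 := by decide
    rcases h01 (PadicInt.toZModPow 1 x) with h | h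
    · left
      have := stmt10_dvd_of_toZModPow (n := 1) h
      simpa using this
    · right
      have : PadicInt.toZModPow 1 (x - 1) = 0 := by
        rw [map_sub, map_one, h, sub_self]
      have := stmt10_dvd_of_toZModPow (n := 1) this
      simpa using this
  rcases hpar A with ⟨A0, hA⟩ | ⟨T, hT⟩
  · -- even case
    rw [hA] at e1 e2
    set K : ℤ_[2] := (mp:ℤ_[2])*(4*A0^2-2*B^2) - (2*A0^2-B^2)^2 + 2*(2*A0)^2*B^2 with hK
    set K2 : ℤ_[2] := (2*A0)*B*(2*mp - ((2*A0)^2-2*B^2)) with hK2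
    have hk : C^2 - 2*D^2 + 1 = 4*K := by rw [hK]; linear_combination e1
    have hk2 : C*D = 2*K2 := by rw [hK2]; linear_combination e2
    have h1 := congrArg (PadicInt.toZModPow 3) hk
    have h2 := congrArg (PadicInt.toZModPow 3) hk2
    simp only [map_add, map_sub, map_mul, map_pow, map_one, map_ofNat] at h1 h2
    exact stmt10_evenCase _ _ _ _ h1 h2
  · -- odd case
    have hA : A = 2*T + 1 := by linear_combination hT
    rw [hA] at e1 e2
    have hCpar : (2:ℤ_[2]) ∣ C := by
      have h1 := congrArg (PadicInt.toZModPow 1) e1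
      simp only [map_add, map_sub, map_mul, map_pow, map_one, map_ofNat, map_zero,
        map_natCast] at h1
      have := stmt10_oddCase1 (PadicInt.toZModPow 1 C) (PadicInt.toZModPow 1 D)
        (PadicInt.toZModPow 1 T) (PadicInt.toZModPow 1 B) ((mp : ZMod 2)) h1
      exact stmt10_dvd_of_toZModPow (n := 1) (by simpa using this)
    obtain ⟨C1, hC⟩ := hCpar
    rw [hC] at e1 e2
    set Y : ℤ_[2] := 2*T^2+2*T-B^2 with hY
    have hA' : D^2 - 2*C1^2 =
        -(2*(mp:ℤ_[2])-1) + 2*Y^2 - 2*(2*(mp:ℤ_[2])-1)*Y - 4*((2*T+1)*B)^2 := by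
      have h2 : (2:ℤ_[2]) * ((D^2 - 2*C1^2) -
          (-(2*(mp:ℤ_[2])-1) + 2*Y^2 - 2*(2*(mp:ℤ_[2])-1)*Y - 4*((2*T+1)*B)^2)) = 0 := by
        rw [hY]; linear_combination -e1
      have := (mul_eq_zero.mp h2).resolve_left two_ne_zero
      linear_combination sub_eq_zero.mp this
    have hB' : D*C1 = (2*T+1)*B*(2*(mp:ℤ_[2]) - ((2*T+1)^2-2*B^2)) := by
      have h2 : (2:ℤ_[2]) * ((D*C1) - ((2*T+1)*B*(2*(mp:ℤ_[2]) - ((2*T+1)^2-2*B^2)))) = 0 := by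
        linear_combination e2
      have := (mul_eq_zero.mp h2).resolve_left two_ne_zero
      linear_combination sub_eq_zero.mp this
    have hm8 : (mp : ZMod 8) = 3 ∨ (mp : ZMod 8) = 7 := by
      have h8 : mp % 8 = 3 ∨ mp % 8 = 7 := by omega
      rcases h8 with h | h
      · left; rw [← ZMod.natCast_mod mp 8, h]; decide
      · right; rw [← ZMod.natCast_mod mp 8, h]; decide
    have h1 := congrArg (PadicInt.toZModPow 3) hA'
    have h2 := congrArg (PadicInt.toZModPow 3) hB'
    rw [hY] at h1
    simp only [map_add, map_sub, map_mul, map_pow, map_one, map_neg, map_ofNat,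
      map_natCast] at h1 h2
    exact stmt10_oddCase2 _ _ _ _ _ hm8 h1 h2

lemma stmt10_main (mp : ℕ) (hmp : mp % 4 = 3) (a b c d : ℚ_[2])
    (ha : ‖a‖ ≤ 1) (hb : ‖b‖ ≤ 1)
    (E1 : c^2 - 2*d^2 + 1 - 4*(mp:ℚ_[2])*(a^2-2*b^2) + (a^2-2*b^2)^2 - 8*a^2*b^2 = 0)
    (E2 : c*d = 2*a*b*(2*(mp:ℚ_[2]) - (a^2-2*b^2))) : False := by
  set A : ℤ_[2] := ⟨a, ha⟩ with hA
  set B : ℤ_[2] := ⟨b, hb⟩ with hB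
  set XZ : ℤ_[2] := -1 + 4*(mp:ℤ_[2])*(A^2-2*B^2) - (A^2-2*B^2)^2 + 8*A^2*B^2 with hXZ
  have hX : c^2 - 2*d^2 = (XZ : ℚ_[2]) := by
    rw [hXZ]
    push_cast
    have h4 : (((4:ℤ_[2])) : ℚ_[2]) = 4 := rfl
    have h2 : (((2:ℤ_[2])) : ℚ_[2]) = 2 := rfl
    have h8 : (((8:ℤ_[2])) : ℚ_[2]) = 8 := rfl
    rw [h4, h2, h8]
    linear_combination E1
  have hXnorm : ‖c^2 - 2*d^2‖ ≤ 1 := by rw [hX]; exact XZ.2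
  have hmax : ‖c^2 + (-2)*d^2‖ = max ‖c^2‖ ‖2*d^2‖ := stmt10_norm_comb c d (-2) (Or.inr rfl)
  rw [show c^2 + (-2)*d^2 = c^2 - 2*d^2 by ring] at hmax
  rw [hmax] at hXnorm
  have hc : ‖c‖ ≤ 1 := by
    have h1 : ‖c^2‖ ≤ 1 := le_trans (le_max_left _ _) hXnorm
    rw [norm_pow] at h1
    nlinarith [norm_nonneg c]
  have hd : ‖d‖ ≤ 1 := by
    have h1 : ‖2*d^2‖ ≤ 1 := le_trans (le_max_right _ _) hXnorm
    by_contra hcon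
    push_neg at hcon
    have h2 := stmt10_two_le_norm hcon
    rw [norm_mul, norm_pow, stmt10_norm_two_q2] at h1
    nlinarith
  set C : ℤ_[2] := ⟨c, hc⟩ with hC
  set D : ℤ_[2] := ⟨d, hd⟩ with hD
  apply stmt10_core mp hmp A B C D
  · apply Subtype.ext
    push_cast
    have h4 : (((4:ℤ_[2])) : ℚ_[2]) = 4 := rfl
    have h2 : (((2:ℤ_[2])) : ℚ_[2]) = 2 := rfl
    have h8 : (((8:ℤ_[2])) : ℚ_[2]) = 8 := rfl
    rw [h4, h2, h8]
    linear_combination E1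
  · apply Subtype.ext
    push_cast
    have h2 : (((2:ℤ_[2])) : ℚ_[2]) = 2 := rfl
    rw [h2]
    linear_combination E2

/-- Let `p` and `q` be odd primes with `q = p + 2` and `p ≡ 5 (mod 8)`. Let `L` be a field
which is a `ℚ₂`-algebra of dimension 2 over `ℚ₂`, and `α ∈ L` with `α² = -2`. Then there
are no `z, w ∈ L` with `w² + 1 - (p+q)z² + z⁴ = 0`. -/
theorem stmt_10 (p q : ℕ) (hp : p.Prime) (hq : q.Prime) (hpo : Odd p) (hqo : Odd q)
    (hpq : q = p + 2) (hp5 : p % 8 = 5)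
    (L : Type*) [Field L] [Algebra ℚ_[2] L] (hdim : Module.finrank ℚ_[2] L = 2)
    (α : L) (hα : α ^ 2 = -2) :
    ¬ ∃ z w : L, w ^ 2 + 1 - ((p : L) + (q : L)) * z ^ 2 + z ^ 4 = 0 := by
  rintro ⟨z, w, H⟩
  set φ := algebraMap ℚ_[2] L with hφ
  have hinj : Function.Injective φ := RingHom.injective φ
  have hno : ∀ a : ℚ_[2], φ a ≠ α := by
    intro a ha
    apply stmt10_no_sqrt_neg_two a
    apply hinj
    rw [map_pow, map_neg, ha, hα, map_ofNat]
  have hLI : LinearIndependent ℚ_[2] ![α, (1:L)] := by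
    rw [linearIndependent_fin2]
    refine ⟨by simp, fun a ha => hno a ?_⟩
    simpa [Algebra.smul_def] using ha
  have hcard : Fintype.card (Fin 2) = Module.finrank ℚ_[2] L := by simp [hdim]
  set hB := basisOfLinearIndependentOfCardEqFinrank hLI hcard with hBdef
  have hrepr : ∀ x : L, ∃ a b : ℚ_[2], x = φ a + φ b * α := by
    intro x
    refine ⟨hB.repr x 1, hB.repr x 0, ?_⟩
    have hsum := hB.sum_repr x
    rw [Fin.sum_univ_two] at hsum
    have hB0 : hB 0 = α := by
      rw [hBdef]
      rw [show ((basisOfLinearIndependentOfCardEqFinrank hLI hcard : Module.Basis (Fin 2) ℚ_[2] L) :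
        Fin 2 → L) = ![α, 1] from coe_basisOfLinearIndependentOfCardEqFinrank hLI hcard]
      simp
    have hB1 : hB 1 = (1:L) := by
      rw [hBdef]
      rw [show ((basisOfLinearIndependentOfCardEqFinrank hLI hcard : Module.Basis (Fin 2) ℚ_[2] L) :
        Fin 2 → L) = ![α, 1] from coe_basisOfLinearIndependentOfCardEqFinrank hLI hcard]
      simp
    conv_lhs => rw [← hsum]
    rw [hB0, hB1, Algebra.smul_def, Algebra.smul_def, mul_one]
    ring
  have huniq : ∀ a b : ℚ_[2], φ a + φ b * α = 0 → a = 0 ∧ b = 0 := by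
    intro a b h
    by_cases hb : b = 0
    · subst hb
      simp only [map_zero, zero_mul, add_zero] at h
      exact ⟨hinj (by simpa using h), rfl⟩
    · exfalso
      apply hno (-a/b)
      have hbφ : φ b ≠ 0 := fun hc => hb (hinj (by simpa using hc))
      rw [map_div₀, map_neg]
      field_simp
      linear_combination -h
  -- arithmetic facts
  have hp2 : p % 2 = 1 := Nat.odd_iff.mp hpo
  set mp : ℕ := (p+1)/2 with hmpdef
  have hmp4 : mp % 4 = 3 := by omega
  have hpq4 : p + q = 4*mp := by omega
  have hs : (p:ℚ_[2]) + (q:ℚ_[2]) = 4*(mp:ℚ_[2]) := by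
    have : ((p + q : ℕ) : ℚ_[2]) = ((4*mp : ℕ) : ℚ_[2]) := by rw [hpq4]
    push_cast at this
    linear_combination this
  -- the main solver
  have solve : ∀ z w : L, (w ^ 2 + 1 - ((p : L) + (q : L)) * z ^ 2 + z ^ 4 = 0) →
      ∀ a b c d : ℚ_[2], z = φ a + φ b * α → w = φ c + φ d * α →
      ‖a‖ ≤ 1 → ‖b‖ ≤ 1 → False := by
    intro z w H a b c d hz hw ha hb
    have hz2 : z^2 = φ (a^2 - 2*b^2) + φ (2*a*b) * α := by
      rw [hz]
      simp only [map_sub, map_mul, map_pow, map_add, map_ofNat]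
      linear_combination (φ b)^2 * hα
    have hw2 : w^2 = φ (c^2 - 2*d^2) + φ (2*c*d) * α := by
      rw [hw]
      simp only [map_sub, map_mul, map_pow, map_add, map_ofNat]
      linear_combination (φ d)^2 * hα
    have hz4 : z^4 = φ ((a^2-2*b^2)^2 - 8*a^2*b^2) + φ (4*a*b*(a^2-2*b^2)) * α := by
      rw [show z^4 = (z^2)^2 by ring, hz2]
      simp only [map_sub, map_mul, map_pow, map_add, map_ofNat]
      linear_combination (2*(φ a)*(φ b))^2 * hα
    rw [hz2, hw2, hz4, ← map_natCast φ p, ← map_natCast φ q] at H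
    have key : φ (c^2 - 2*d^2 + 1 - ((p:ℚ_[2])+(q:ℚ_[2]))*(a^2-2*b^2) + (a^2-2*b^2)^2
          - 8*a^2*b^2)
        + φ (2*c*d - 2*((p:ℚ_[2])+(q:ℚ_[2]))*a*b + 4*a*b*(a^2-2*b^2)) * α = 0 := by
      simp only [map_sub, map_mul, map_pow, map_add, map_ofNat, map_one] at H ⊢
      linear_combination H
    obtain ⟨hE1raw, hE2raw⟩ := huniq _ _ key
    apply stmt10_main mp hmp4 a b c d ha hb
    · linear_combination hE1raw + (a^2-2*b^2)*hs
    · linear_combination (1/2) * hE2raw + (a*b) * hs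
  obtain ⟨a, b, hz⟩ := hrepr z
  obtain ⟨c, d, hw⟩ := hrepr w
  by_cases hab : ‖a‖ ≤ 1 ∧ ‖b‖ ≤ 1
  · exact solve z w H a b c d hz hw hab.1 hab.2
  · -- inversion
    set N : ℚ_[2] := a^2 + 2*b^2 with hNdef
    have hmaxN : ‖N‖ = max ‖a^2‖ ‖2*b^2‖ := stmt10_norm_comb a b 2 (Or.inl rfl)
    rw [norm_pow, norm_mul, norm_pow, stmt10_norm_two_q2] at hmaxN
    have hN2 : 2 ≤ ‖N‖ := by
      rcases not_and_or.mp hab with h1 | h1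
      · push_neg at h1
        have := stmt10_two_le_norm h1
        rw [hmaxN]
        have : 4 ≤ ‖a‖^2 := by nlinarith
        calc (2:ℝ) ≤ ‖a‖^2 := by linarith
          _ ≤ _ := le_max_left _ _
      · push_neg at h1
        have := stmt10_two_le_norm h1
        rw [hmaxN]
        have h4 : 2 ≤ 2⁻¹*‖b‖^2 := by nlinarith
        calc (2:ℝ) ≤ 2⁻¹*‖b‖^2 := h4
          _ ≤ _ := le_max_right _ _
    have hNa : ‖a‖ ≤ ‖N‖ := by
      rcases le_or_gt ‖a‖ 1 with h1 | h1
      · linarith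
      · have h2 := stmt10_two_le_norm h1
        rw [hmaxN]
        have : ‖a‖ ≤ ‖a‖^2 := by nlinarith
        calc ‖a‖ ≤ ‖a‖^2 := this
          _ ≤ _ := le_max_left _ _
    have hNb : ‖b‖ ≤ ‖N‖ := by
      rcases le_or_gt ‖b‖ 1 with h1 | h1
      · linarith
      · have h2 := stmt10_two_le_norm h1
        rw [hmaxN]
        have : ‖b‖ ≤ 2⁻¹*‖b‖^2 := by nlinarith
        calc ‖b‖ ≤ 2⁻¹*‖b‖^2 := this
          _ ≤ _ := le_max_right _ _
    have hNne : N ≠ 0 := by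
      intro h0
      rw [h0, norm_zero] at hN2
      linarith
    have hzne : z ≠ 0 := by
      intro h0
      rw [h0] at hz
      obtain ⟨ha0, hb0⟩ := huniq a b hz.symm
      exact hab ⟨by rw [ha0, norm_zero]; norm_num, by rw [hb0, norm_zero]; norm_num⟩
    have hzinv : z⁻¹ = φ (a/N) + φ (-b/N) * α := by
      apply inv_eq_of_mul_eq_one_right
      rw [hz]
      simp only [map_div₀, map_neg, map_add, map_mul, map_pow, map_ofNat]
      have hNφ : (φ a)^2 + 2*(φ b)^2 ≠ 0 := by
        intro hcon
        apply hNne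
        apply hinj
        rw [hNdef]
        simp only [map_add, map_mul, map_pow, map_ofNat, map_zero]
        exact hcon
      rw [hNdef]
      simp only [map_add, map_mul, map_pow, map_ofNat]
      field_simp
      rw [div_eq_one_iff_eq (by contrapose! hNφ; linear_combination hNφ)]
      linear_combination (-(φ b)^2) * hα
    have H' : (w * (z⁻¹)^2) ^ 2 + 1 - ((p : L) + (q : L)) * (z⁻¹) ^ 2 + (z⁻¹) ^ 4 = 0 := by
      field_simp
      linear_combination H
    obtain ⟨c', d', hw'⟩ := hrepr (w * (z⁻¹)^2)
    have hNpos : (0:ℝ) < ‖N‖ := by linarith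
    apply solve (z⁻¹) (w * (z⁻¹)^2) H' (a/N) (-b/N) c' d' hzinv hw'
    · rw [norm_div]
      rw [div_le_one hNpos]
      exact hNa
    · rw [norm_div, norm_neg]
      rw [div_le_one hNpos]
      exact hNb
end

section
/- Let p and q be odd prime numbers with q = p + 2 and p ≡ 5 (mod 8). Then there exist z, w ∈ ℚ_p with w² + 1 + (p+q)z² + z⁴ = 0. -/
lemma sq_eq_neg_one_padic (p : ℕ) [hp : Fact p.Prime] (hpo : Odd p) (hp4 : p % 4 = 1) :
    ∃ w : ℤ_[p], w ^ 2 + 1 = 0 := by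
  obtain ⟨y, hy⟩ : IsSquare (-1 : ZMod p) := by
    rw [ZMod.exists_sq_eq_neg_one_iff]
    omega
  -- a : ℤ_[p] lift of y
  set a : ℤ_[p] := (y.val : ℤ_[p]) with ha
  have hpdvd : (p : ℤ_[p]) ∣ a ^ 2 + 1 := by
    have : ((a ^ 2 + 1 : ℤ_[p]) : ℤ_[p]) = ((y.val ^ 2 + 1 : ℕ) : ℤ_[p]) := by push_cast; ring
    rw [this]
    have h2 : (p : ℕ) ∣ y.val ^ 2 + 1 := by
      have : ((y.val ^ 2 + 1 : ℕ) : ZMod p) = 0 := by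
        push_cast [ZMod.natCast_val, ZMod.cast_id]
        rw [sq, ← hy]; ring
      exact (ZMod.natCast_eq_zero_iff _ _).mp this
    exact_mod_cast Nat.cast_dvd_cast h2
  have hpa : ¬ (p : ℤ_[p]) ∣ a := by
    intro hdvd
    have : (p : ℤ_[p]) ∣ 1 := by
      have := dvd_sub hpdvd (Dvd.dvd.mul_left hdvd a)
      simpa [sq, mul_comm] using this
    have := PadicInt.norm_lt_one_iff_dvd 1 |>.mpr this
    simp at this
  have hF : ∃ z : ℤ_[p], (Polynomial.X ^ 2 + 1 : Polynomial ℤ_[p]).eval z = 0 := by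
    have h := hensels_lemma (p := p) (F := (Polynomial.X ^ 2 + 1 : Polynomial ℤ_[p])) (a := a) ?_
    · obtain ⟨z, hz, _⟩ := h; exact ⟨z, hz⟩
    · have heval : (Polynomial.X ^ 2 + 1 : Polynomial ℤ_[p]).eval a = a ^ 2 + 1 := by simp
      have hderiv : (Polynomial.X ^ 2 + 1 : Polynomial ℤ_[p]).derivative.eval a = 2 * a := by
        simp [Polynomial.derivative_X_pow]; norm_num
      rw [Polynomial.coe_aeval_eq_eval, heval, hderiv]
      have h2a : ¬ (p : ℤ_[p]) ∣ 2 * a := by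
        intro hdvd
        rcases (PadicInt.prime_p.dvd_mul.mp hdvd) with h | h
        · have h2 : ‖(2 : ℤ_[p])‖ < 1 := (PadicInt.norm_lt_one_iff_dvd _).mpr h
          have : ((p : ℤ) ∣ (2 : ℤ)) := by
            rw [← PadicInt.norm_int_lt_one_iff_dvd]
            simpa using h2
          have h2le := Int.le_of_dvd (by norm_num) this
          have := (Fact.out : p.Prime).two_le
          omega
        · exact hpa h
      have h1 : ‖2 * a‖ = 1 := by
        rcases lt_or_eq_of_le (PadicInt.norm_le_one (2 * a)) with h | h
        · exact absurd ((PadicInt.norm_lt_one_iff_dvd _).mp h) h2a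
        · exact h
      have h2 : ‖a ^ 2 + 1‖ < 1 := (PadicInt.norm_lt_one_iff_dvd _).mpr hpdvd
      rw [h1]; simpa using h2
  obtain ⟨z, hz⟩ := hF
  exact ⟨z, by simpa using hz⟩

/-- Let `p` and `q` be odd primes with `q = p + 2` and `p ≡ 5 (mod 8)`. Then there exist
`z, w ∈ ℚ_p` with `w² + 1 + (p+q)z² + z⁴ = 0`. -/
theorem stmt_11 (p q : ℕ) [Fact p.Prime] (hq : q.Prime) (hpo : Odd p) (hqo : Odd q)
    (hpq : q = p + 2) (hp5 : p % 8 = 5) :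
    ∃ z w : ℚ_[p], w ^ 2 + 1 + ((p : ℚ_[p]) + (q : ℚ_[p])) * z ^ 2 + z ^ 4 = 0 := by
  obtain ⟨w, hw⟩ := sq_eq_neg_one_padic p hpo (by omega)
  refine ⟨0, (w : ℚ_[p]), ?_⟩
  have : ((w : ℚ_[p]) ^ 2 + 1) = ((w ^ 2 + 1 : ℤ_[p]) : ℚ_[p]) := by push_cast; ring
  rw [hw] at this
  simp [this]
end

section
/- Let p and q be odd prime numbers with q = p + 2 and p ≡ 5 (mod 8). Let L be a field equipped with a ℚ_q-algebra structure and let α ∈ L satisfy α² = -2. Then there exist z, w ∈ L with w² + 1 + (p+q)z² + z⁴ = 0. -/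
lemma unit_norm_of_toZMod_ne (q : ℕ) [Fact q.Prime] (x : ℤ_[q])
    (h : PadicInt.toZMod x ≠ 0) : ‖x‖ = 1 := by
  refine le_antisymm x.norm_le_one (not_lt.1 fun hlt => h ?_)
  rw [PadicInt.norm_lt_one_iff_dvd] at hlt
  have hm : x ∈ RingHom.ker (PadicInt.toZMod (p := q)) := by
    rw [PadicInt.ker_toZMod, PadicInt.maximalIdeal_eq_span_p, Ideal.mem_span_singleton]
    exact hlt
  exact RingHom.mem_ker.1 hm

lemma two_sq_padic (q : ℕ) [Fact q.Prime] (hq7 : q % 8 = 7) : ∃ s : ℚ_[q], s ^ 2 = 2 := by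
  have hq2 : q ≠ 2 := by omega
  obtain ⟨b, hb⟩ := (ZMod.exists_sq_eq_two_iff hq2).2 (Or.inr hq7)
  have h2z : ((2 : ℕ) : ZMod q) ≠ 0 := by
    rw [Ne, ZMod.natCast_eq_zero_iff]
    exact fun h => by have := Nat.le_of_dvd two_pos h; omega
  set a : ℤ_[q] := (b.val : ℤ_[q]) with ha
  have htoa : PadicInt.toZMod a = b := by
    simp [ha, ZMod.natCast_val, ZMod.cast_id]
  have hb0 : b ≠ 0 := by
    rintro rfl
    exact h2z (by simpa using hb)
  have hto2 : PadicInt.toZMod (2 : ℤ_[q]) = 2 := map_ofNat _ 2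
  have h2 : PadicInt.toZMod (2 : ℤ_[q]) ≠ 0 := by
    rw [hto2]; simpa using h2z
  set F : Polynomial ℤ_[q] := Polynomial.X ^ 2 - Polynomial.C 2 with hF
  have hFa : F.eval a = a ^ 2 - 2 := by simp [hF]
  have hF' : F.derivative.eval a = 2 * a := by simp [hF]; norm_num
  have heval_lt : ‖F.eval a‖ < 1 := by
    rw [hFa, PadicInt.norm_lt_one_iff_dvd, ← Ideal.mem_span_singleton,
      ← PadicInt.maximalIdeal_eq_span_p, ← PadicInt.ker_toZMod, RingHom.mem_ker]
    rw [map_sub, map_pow, htoa, pow_two, ← hb, hto2, sub_self]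
  have hderiv : ‖F.derivative.eval a‖ = 1 := by
    rw [hF', norm_mul, unit_norm_of_toZMod_ne q 2 h2,
      unit_norm_of_toZMod_ne q a (htoa ▸ hb0), one_mul]
  obtain ⟨z, hz, -⟩ := hensels_lemma (F := F) (a := a)
    (by simp only [Polynomial.coe_aeval_eq_eval]; rw [hderiv]; simpa using heval_lt)
  refine ⟨(z : ℚ_[q]), ?_⟩
  have hz2 : z ^ 2 = 2 := sub_eq_zero.1 (by rw [← hz]; simp [hF])
  have := congrArg (PadicInt.Coe.ringHom (p := q)) hz2
  simp only [map_pow, map_ofNat] at this; exact this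

/-- Let `p` and `q` be odd primes with `q = p + 2` and `p ≡ 5 (mod 8)`. Let `L` be a field
which is a `ℚ_q`-algebra and `α ∈ L` with `α² = -2`. Then there exist `z, w ∈ L` with
`w² + 1 + (p+q)z² + z⁴ = 0`. -/
theorem stmt_12 (p q : ℕ) (hp : p.Prime) [Fact q.Prime] (hpo : Odd p) (hqo : Odd q)
    (hpq : q = p + 2) (hp5 : p % 8 = 5)
    (L : Type*) [Field L] [Algebra ℚ_[q] L] (α : L) (hα : α ^ 2 = -2) :
    ∃ z w : L, w ^ 2 + 1 + ((p : L) + (q : L)) * z ^ 2 + z ^ 4 = 0 := by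
  obtain ⟨s, hs⟩ := two_sq_padic q (by omega)
  have hs0 : s ≠ 0 := fun h => by simp [h] at hs
  refine ⟨0, algebraMap ℚ_[q] L s⁻¹ * α, ?_⟩
  have hw : (algebraMap ℚ_[q] L s⁻¹ * α) ^ 2 = -1 := by
    rw [mul_pow, hα, ← map_pow]
    have : (s⁻¹) ^ 2 * (-2) = -1 := by
      rw [← hs]; field_simp
    calc algebraMap ℚ_[q] L (s⁻¹ ^ 2) * (-2 : L)
        = algebraMap ℚ_[q] L (s⁻¹ ^ 2) * algebraMap ℚ_[q] L (-2) := by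
          rw [map_neg, map_ofNat]
      _ = algebraMap ℚ_[q] L (s⁻¹ ^ 2 * (-2)) := (map_mul _ _ _).symm
      _ = algebraMap ℚ_[q] L (-1) := by rw [this]
      _ = -1 := by simp
  rw [hw]; ring
end

section
/- Let p and q be odd prime numbers with q = p + 2 and p ≡ 5 (mod 8). Let L be a field equipped with a ℚ₂-algebra structure and let α ∈ L satisfy α² = -2. Then there exist z, w ∈ L with w² + 1 + (p+q)z² + z⁴ = 0. -/
open Polynomial in
lemma sq_root_exists (u k : ℤ_[2]) (h : u = 1 + 2 ^ 3 * k) : ∃ r : ℤ_[2], r ^ 2 = u := by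
  have h2 : ‖(2 : ℤ_[2])‖ = (1:ℝ)/2 := by
    have := @PadicInt.norm_p 2 _
    simpa using this
  have hnorm : ‖(X ^ 2 - C u : Polynomial ℤ_[2]).eval 1‖ <
      ‖(X ^ 2 - C u : Polynomial ℤ_[2]).derivative.eval 1‖ ^ 2 := by
    have he : (X ^ 2 - C u : Polynomial ℤ_[2]).eval 1 = -(2^3 * k) := by
      rw [h]; simp
    have hd : (X ^ 2 - C u : Polynomial ℤ_[2]).derivative.eval 1 = 2 := by
      simp [Polynomial.derivative_pow]
    rw [he, hd, norm_neg, norm_mul, h2]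
    have : ‖(2:ℤ_[2])^3‖ = ((1:ℝ)/2)^3 := by rw [norm_pow, h2]
    rw [this]
    have hk := PadicInt.norm_le_one k
    nlinarith [norm_nonneg k]
  obtain ⟨z, hz, -, -, -⟩ := hensels_lemma hnorm
  refine ⟨z, ?_⟩
  have : z ^ 2 - u = 0 := by simpa using hz
  exact sub_eq_zero.mp this

lemma exists_gamma (m : ℕ) :
    ∃ γ : ℤ_[2], (γ^2)^2 + (((8*m+5 : ℕ):ℤ_[2])+4) * γ^2 - 2*((8*m+5 : ℕ):ℤ_[2])^2 = 0 := by
  set P : ℤ_[2] := ((8*m+5 : ℕ) : ℤ_[2]) with hP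
  have hn : ((9*(8*m+5)^2+8*(8*m+5)+16 : ℕ) : ℤ_[2])
      = 1 + 2^3 * ((72*m^2+98*m+35 : ℕ) : ℤ_[2]) := by push_cast; ring
  obtain ⟨s, hs⟩ := sq_root_exists _ _ hn
  have hs2 : s^2 = (P+4)^2 + 8*P^2 := by rw [hs, hP]; push_cast; ring
  have hnat2 : ((9*(8*m+5)^2+8*(8*m+5)+16 : ℕ) : ZMod (2^2)) = 1 := by
    have hA : (9*(8*m+5)^2+8*(8*m+5)+16 : ℕ) = 4*(144*m^2+196*m+70)+1 := by ring
    rw [hA]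
    push_cast
    have h0 : (4 : ZMod (2^2)) = 0 := by decide
    rw [h0]; ring
  have hsq4 : (PadicInt.toZModPow (p := 2) 2 s)^2 = 1 := by
    rw [← map_pow, hs, map_natCast, hnat2]
  have hkey : ∀ x : ZMod (2^2), x^2 = 1 → x = 1 ∨ x = 3 := by decide
  obtain ⟨s', hs'2, hs'4⟩ : ∃ s' : ℤ_[2], s'^2 = (P+4)^2 + 8*P^2 ∧
      PadicInt.toZModPow (p := 2) 2 s' = 3 := by
    rcases hkey _ hsq4 with h | h
    · refine ⟨-s, by rw [neg_pow]; simpa using hs2, by rw [map_neg, h]; decide⟩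
    · exact ⟨s, hs2, h⟩
  have hP4 : PadicInt.toZModPow (p := 2) 2 (P+4) = 1 := by
    have hPe : P + 4 = ((4*(2*m+2)+1 : ℕ) : ℤ_[2]) := by rw [hP]; push_cast; ring
    rw [hPe, map_natCast]
    push_cast
    have h0 : (4 : ZMod (2^2)) = 0 := by decide
    rw [h0]; ring
  have hc := PadicInt.zmod_cast_comp_toZModPow (p := 2) 1 2 (by norm_num)
  obtain ⟨e, he⟩ : ∃ e, s' - (P+4) = 2 * e := by
    have hmem : s' - (P+4) ∈ RingHom.ker (PadicInt.toZModPow (p := 2) 1) := by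
      rw [RingHom.mem_ker, map_sub,
        ← RingHom.congr_fun hc s', ← RingHom.congr_fun hc (P+4),
        RingHom.comp_apply, RingHom.comp_apply, hs'4, hP4]
      decide
    rw [PadicInt.ker_toZModPow, Ideal.mem_span_singleton] at hmem
    obtain ⟨e, he⟩ := hmem
    exact ⟨e, by rw [he]; push_cast; ring⟩
  have h4 : (4:ℤ_[2]) * (e^2 + (P+4)*e - 2*P^2) = 0 := by
    linear_combination hs'2 - (s' + 2*e + (P+4)) * he
  have he0 : e^2 + (P+4)*e - 2*P^2 = 0 := by
    rcases mul_eq_zero.mp h4 with h | h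
    · norm_num at h
    · exact h
  have hc23 := PadicInt.zmod_cast_comp_toZModPow (p := 2) 2 3 (by norm_num)
  have hE : PadicInt.toZModPow (p := 2) 3 e = 1 := by
    set E := PadicInt.toZModPow (p := 2) 3 e with hEdef
    have hP8 : PadicInt.toZModPow (p := 2) 3 P = 5 := by
      rw [hP, map_natCast]
      push_cast
      have h0 : (8 : ZMod (2^3)) = 0 := by decide
      rw [h0]; ring
    have hEq : E^2 + (5+4)*E - 2*5^2 = 0 := by
      have h := congrArg (PadicInt.toZModPow (p := 2) 3) he0
      simp only [map_add, map_sub, map_mul, map_pow, map_ofNat, map_zero, hP8, ← hEdef] at h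
      convert h using 2 <;> norm_num
    have h2e : PadicInt.toZModPow (p := 2) 2 e
        = ZMod.castHom (pow_dvd_pow 2 (by norm_num : 2 ≤ 3)) (ZMod (2^2)) E :=
      (RingHom.congr_fun hc23 e).symm
    have h1 := congrArg (PadicInt.toZModPow (p := 2) 2) he
    rw [map_sub, map_mul, map_ofNat, hs'4, hP4, h2e] at h1
    have hpar : 2 * (ZMod.castHom (pow_dvd_pow 2 (by norm_num : 2 ≤ 3)) (ZMod (2^2)) E) = 2 := by
      linear_combination -h1
    have hall : ∀ x : ZMod (2^3), x^2 + (5+4)*x - 2*5^2 = 0 →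
        2 * (ZMod.castHom (pow_dvd_pow 2 (by norm_num : 2 ≤ 3)) (ZMod (2^2)) x) = 2 →
        x = 1 := by decide
    exact hall E hEq hpar
  obtain ⟨k, hk⟩ : ∃ k, e - 1 = 2^3 * k := by
    have hmem : e - 1 ∈ RingHom.ker (PadicInt.toZModPow (p := 2) 3) := by
      rw [RingHom.mem_ker, map_sub, hE, map_one, sub_self]
    rw [PadicInt.ker_toZModPow, Ideal.mem_span_singleton] at hmem
    obtain ⟨k, hk⟩ := hmem
    exact ⟨k, by rw [hk]; push_cast; ring⟩
  obtain ⟨c, hc2⟩ := sq_root_exists e k (by linear_combination hk)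
  exact ⟨c, by rw [hc2]; exact he0⟩

/-- Let `p` and `q` be odd primes with `q = p + 2` and `p ≡ 5 (mod 8)`. Let `L` be a field
which is a `ℚ₂`-algebra and `α ∈ L` with `α² = -2`. Then there exist `z, w ∈ L` with
`w² + 1 + (p+q)z² + z⁴ = 0`. -/
theorem stmt_13 (p q : ℕ) (hp : p.Prime) (hq : q.Prime) (hpo : Odd p) (hqo : Odd q)
    (hpq : q = p + 2) (hp5 : p % 8 = 5)
    (L : Type*) [Field L] [Algebra ℚ_[2] L] (α : L) (hα : α ^ 2 = -2) :
    ∃ z w : L, w ^ 2 + 1 + ((p : L) + (q : L)) * z ^ 2 + z ^ 4 = 0 := by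
  haveI : CharZero L := charZero_of_injective_algebraMap (algebraMap ℚ_[2] L).injective
  obtain ⟨m, rfl⟩ : ∃ m, p = 8*m+5 := ⟨p/8, by omega⟩
  obtain ⟨γ, hγ⟩ := exists_gamma m
  set f : ℤ_[2] →+* L := (algebraMap ℚ_[2] L).comp (PadicInt.Coe.ringHom) with hf
  set g : L := f γ with hg
  have hgeq : (g^2)^2 + (8*(m:L)+5+4) * g^2 - 2*(8*(m:L)+5)^2 = 0 := by
    have h := congrArg f hγ
    simp only [map_add, map_sub, map_mul, map_pow, map_ofNat, map_zero, map_natCast, ← hg] at h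
    push_cast at h
    convert h using 2 <;> push_cast <;> ring
  have hp0 : (8*(m:L)+5) ≠ 0 := by
    have : ((8*m+5 : ℕ) : L) ≠ 0 := Nat.cast_ne_zero.mpr (by omega)
    push_cast at this
    exact this
  have hg0 : g ≠ 0 := by
    intro h
    rw [h] at hgeq
    have h2 : (2:L) * (8*(m:L)+5)^2 = 0 := by linear_combination -hgeq
    rcases mul_eq_zero.mp h2 with h' | h'
    · norm_num at h'
    · exact hp0 (pow_eq_zero_iff (by norm_num) |>.mp h')
  have hq' : ((q:ℕ) : L) = 8*(m:L)+5 + 2 := by rw [hpq]; push_cast; ring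
  refine ⟨1 + α, g * α - 2*(8*(m:L)+5)/g, ?_⟩
  rw [hq']
  push_cast
  field_simp
  linear_combination (g^2*(g^2 + 2*(8*(m:L)+5) + 4 + 4*α + (α^2+2))) * hα + (-2) * hgeq
end

section
/- Let p and q be prime numbers with q = p + 2 and p ≡ 1 (mod 4). Let L be a field equipped with a ℚ₂-algebra structure such that L has dimension 2 as a ℚ₂-vector space, and let α ∈ L satisfy α² = -1. Then there are no z, w ∈ L with -α·w² - 1 - (p+q)·α·z² + pq·z⁴ = 0. -/
-- -1 is not a square in ℚ₂
lemma neg_one_not_sq (r : ℚ_[2]) : r ^ 2 ≠ -1 := by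
  intro h
  have hr : ‖r‖ ≤ 1 := by
    have h2 : ‖r‖ ^ 2 = 1 := by
      have := congrArg norm h
      rw [norm_pow] at this
      simpa using this
    nlinarith [norm_nonneg r]
  set r' : ℤ_[2] := ⟨r, hr⟩ with hr'
  have h2 : r' ^ 2 = -1 := by
    apply Subtype.coe_injective
    push_cast
    exact h
  have h3 : (PadicInt.toZModPow 3 r') ^ 2 = -1 := by
    have := congrArg (PadicInt.toZModPow 3) h2
    rw [map_pow, map_neg, map_one] at this
    exact this
  have : ∀ u : ZMod (2 ^ 3), u ^ 2 ≠ -1 := by decide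
  exact this _ h3

-- residue classes
lemma res2 (x : ℤ_[2]) : (2 : ℤ_[2]) ∣ x ∨ (2 : ℤ_[2]) ∣ (x - 1) := by
  have hz : PadicInt.toZMod (x * (x - 1)) = 0 := by
    have : ∀ t : ZMod 2, t * (t - 1) = 0 := by decide
    rw [map_mul, map_sub, map_one]
    exact this _
  have hdvd : ((2 : ℕ) : ℤ_[2]) ∣ x * (x - 1) := by
    have hk : x * (x - 1) ∈ RingHom.ker (PadicInt.toZMod (p := 2)) := hz
    rw [PadicInt.ker_toZMod, PadicInt.maximalIdeal_eq_span_p, Ideal.mem_span_singleton] at hk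
    exact hk
  have hprime : Prime ((2 : ℕ) : ℤ_[2]) := PadicInt.prime_p
  rcases hprime.2.2 _ _ hdvd with h | h
  · left; exact_mod_cast h
  · right; exact_mod_cast h

lemma norm_le_half_of_dvd (x : ℤ_[2]) (h : (2 : ℤ_[2]) ∣ x) : ‖x‖ ≤ 2⁻¹ := by
  obtain ⟨c, rfl⟩ := h
  rw [norm_mul]
  have h2 : ‖(2 : ℤ_[2])‖ = 2⁻¹ := by
    have := PadicInt.norm_p (p := 2)
    simpa using this
  rw [h2]
  have := PadicInt.norm_le_one c
  nlinarith [norm_nonneg c]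

-- key unit lemma: ‖r‖ = 1 → ‖1 + r²‖ = 1/2
lemma norm_one_add_sq (r : ℚ_[2]) (hr : ‖r‖ = 1) : ‖1 + r ^ 2‖ = 2⁻¹ := by
  have hrle : ‖r‖ ≤ 1 := le_of_eq hr
  set r' : ℤ_[2] := ⟨r, hrle⟩ with hr'def
  have hcoe : (r' : ℚ_[2]) = r := rfl
  rcases res2 r' with h | h
  · exfalso
    have := norm_le_half_of_dvd r' h
    rw [PadicInt.norm_def, hcoe, hr] at this
    norm_num at this
  · -- r = 1 + 2a
    obtain ⟨a, ha⟩ := h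
    have hra : r = 1 + 2 * (a : ℚ_[2]) := by
      have h1 : (r' : ℚ_[2]) - 1 = ((2 : ℤ_[2]) : ℚ_[2]) * (a : ℚ_[2]) := by
        rw [← PadicInt.coe_mul, ← ha, PadicInt.coe_sub, PadicInt.coe_one]
      have h2 : ((2 : ℤ_[2]) : ℚ_[2]) = 2 := rfl
      rw [h2, hcoe] at h1
      linear_combination h1
    have hna : ‖(a : ℚ_[2])‖ ≤ 1 := PadicInt.norm_le_one a
    -- 1 + r² = 2 * u, u = 1 + 2*(a + a²)
    have hu : 1 + r ^ 2 = 2 * (1 + 2 * ((a : ℚ_[2]) + (a : ℚ_[2]) ^ 2)) := by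
      rw [hra]; ring
    have hnorm2 : ‖(2 : ℚ_[2])‖ = 2⁻¹ := by
      have := Padic.norm_p (p := 2)
      simpa using this
    have hsmall : ‖2 * ((a : ℚ_[2]) + (a : ℚ_[2]) ^ 2)‖ ≤ 2⁻¹ := by
      rw [norm_mul, hnorm2]
      have : ‖(a : ℚ_[2]) + (a : ℚ_[2]) ^ 2‖ ≤ 1 := by
        refine le_trans (Padic.nonarchimedean _ _) ?_
        rw [norm_pow]
        apply max_le hna
        nlinarith [norm_nonneg ((a : ℤ_[2]) : ℚ_[2])]
      nlinarith
    have huu : ‖1 + 2 * ((a : ℚ_[2]) + (a : ℚ_[2]) ^ 2)‖ = 1 := by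
      rw [Padic.add_eq_max_of_ne]
      · rw [norm_one, max_eq_left]
        exact le_trans hsmall (by norm_num)
      · rw [norm_one]
        intro hcon
        rw [← hcon] at hsmall
        norm_num at hsmall
    rw [hu, norm_mul, hnorm2, huu, mul_one]



-- ‖s‖² ≤ 2‖s²+t²‖
lemma normN (s t : ℚ_[2]) : ‖s‖ ^ 2 ≤ 2 * ‖s ^ 2 + t ^ 2‖ := by
  rcases lt_trichotomy ‖s‖ ‖t‖ with h | h | h
  · have hne : ‖s ^ 2‖ ≠ ‖t ^ 2‖ := by
      rw [norm_pow, norm_pow]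
      nlinarith [norm_nonneg s, norm_nonneg t]
    rw [Padic.add_eq_max_of_ne hne, norm_pow, norm_pow]
    rw [max_eq_right (by nlinarith [norm_nonneg s, norm_nonneg t])]
    nlinarith [norm_nonneg s, norm_nonneg t]
  · by_cases hs : s = 0
    · have ht : ‖t‖ = 0 := by rw [← h, hs, norm_zero]
      rw [hs, norm_zero]
      norm_num [norm_nonneg]
    · have hsne : ‖s‖ ≠ 0 := by simpa [norm_eq_zero] using hs
      have hr : ‖t / s‖ = 1 := by
        rw [norm_div, ← h, div_self hsne]
      have hst : s ^ 2 + t ^ 2 = s ^ 2 * (1 + (t / s) ^ 2) := by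
        field_simp
      rw [hst, norm_mul, norm_one_add_sq _ hr, norm_pow]
      nlinarith [norm_nonneg s]
  · have hne : ‖s ^ 2‖ ≠ ‖t ^ 2‖ := by
      rw [norm_pow, norm_pow]
      nlinarith [norm_nonneg s, norm_nonneg t]
    rw [Padic.add_eq_max_of_ne hne, norm_pow, norm_pow]
    rw [max_eq_left (by nlinarith [norm_nonneg s, norm_nonneg t])]
    nlinarith [norm_nonneg s]

-- discreteness: ‖x‖² ≤ 2 → ‖x‖ ≤ 1
lemma norm_le_one_of_sq_le_two (x : ℚ_[2]) (h : ‖x‖ ^ 2 ≤ 2) : ‖x‖ ≤ 1 := by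
  by_contra hc
  push_neg at hc
  have hx0 : x ≠ 0 := by
    intro h0; rw [h0, norm_zero] at hc; norm_num at hc
  rw [Padic.norm_eq_zpow_neg_valuation hx0] at hc h
  set v : ℤ := -x.valuation with hv
  have h2 : (1 : ℝ) < 2 := one_lt_two
  have hvpos : 0 < v := by
    by_contra hvn
    push_neg at hvn
    have : ((2 : ℕ) : ℝ) ^ v ≤ 1 := by
      apply zpow_le_one_of_nonpos₀ (by norm_num) hvn
    norm_num at this hc
    linarith
  have : ((2 : ℕ) : ℝ) ^ (1 : ℤ) ≤ ((2 : ℕ) : ℝ) ^ v := by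
    apply zpow_le_zpow_right₀ (by norm_num) hvpos
  norm_num at this h
  nlinarith
lemma coords_int (s t : ℚ_[2]) (h1 : ‖s ^ 2 - t ^ 2‖ ≤ 1) (h2 : ‖2 * s * t‖ ≤ 1) :
    ‖s‖ ≤ 1 ∧ ‖t‖ ≤ 1 := by
  have hid : (s ^ 2 + t ^ 2) ^ 2 = (s ^ 2 - t ^ 2) ^ 2 + (2 * s * t) ^ 2 := by ring
  have hsq : ‖s ^ 2 + t ^ 2‖ ^ 2 ≤ 1 := by
    rw [← norm_pow, hid]
    refine le_trans (Padic.nonarchimedean _ _) ?_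
    rw [norm_pow, norm_pow]
    apply max_le <;> nlinarith [norm_nonneg (s ^ 2 - t ^ 2), norm_nonneg (2 * s * t)]
  have hN : ‖s ^ 2 + t ^ 2‖ ≤ 1 := by nlinarith [norm_nonneg (s ^ 2 + t ^ 2)]
  constructor
  · apply norm_le_one_of_sq_le_two
    nlinarith [normN s t]
  · apply norm_le_one_of_sq_le_two
    have := normN t s
    rw [add_comm] at this
    nlinarith



lemma two_le_norm_of_one_lt (x : ℚ_[2]) (h : 1 < ‖x‖) : 2 ≤ ‖x‖ := by
  have hx0 : x ≠ 0 := by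
    intro h0; rw [h0, norm_zero] at h; norm_num at h
  rw [Padic.norm_eq_zpow_neg_valuation hx0] at h ⊢
  set v : ℤ := -x.valuation with hv
  have hvpos : 0 < v := by
    by_contra hvn
    push_neg at hvn
    have : ((2 : ℕ) : ℝ) ^ v ≤ 1 := zpow_le_one_of_nonpos₀ (by norm_num) hvn
    linarith
  have : ((2 : ℕ) : ℝ) ^ (1 : ℤ) ≤ ((2 : ℕ) : ℝ) ^ v := zpow_le_zpow_right₀ (by norm_num) hvpos
  norm_num at this ⊢
  linarith

section Alg
variable {L : Type*} [Field L] [Algebra ℚ_[2] L]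

lemma not_alg_sqrt (c : ℚ_[2]) (α : L) (hα : α ^ 2 = -1)
    (h : α = algebraMap ℚ_[2] L c) : False := by
  apply neg_one_not_sq c
  apply (algebraMap ℚ_[2] L).injective
  rw [map_pow, ← h, hα, map_neg, map_one]

lemma indep_pair (α : L) (hα : α ^ 2 = -1) (a b : ℚ_[2])
    (h : algebraMap ℚ_[2] L a + algebraMap ℚ_[2] L b * α = 0) : a = 0 ∧ b = 0 := by
  by_cases hb : b = 0
  · refine ⟨?_, hb⟩
    rw [hb, map_zero, zero_mul, add_zero] at h
    exact (algebraMap ℚ_[2] L).injective (by simpa using h)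
  · exfalso
    have hbne : algebraMap ℚ_[2] L b ≠ 0 := fun hc =>
      hb ((algebraMap ℚ_[2] L).injective (by simpa using hc))
    apply not_alg_sqrt (-a / b) α hα
    rw [map_div₀, eq_div_iff hbne, map_neg]
    linear_combination h

lemma exists_coords (hdim : Module.finrank ℚ_[2] L = 2) (α : L) (hα : α ^ 2 = -1) (u : L) :
    ∃ a b : ℚ_[2], u = algebraMap ℚ_[2] L a + algebraMap ℚ_[2] L b * α := by
  have hli : LinearIndependent ℚ_[2] ![(1 : L), α] := by
    rw [linearIndependent_fin2]
    refine ⟨?_, ?_⟩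
    · show α ≠ 0
      intro hc
      rw [hc] at hα
      simp only [ne_eq, zero_pow, OfNat.ofNat_ne_zero, not_false_iff] at hα
      exact one_ne_zero (α := L) (by linear_combination hα)
    · intro c hc
      show False
      simp only [Matrix.cons_val_one, Matrix.head_cons, Matrix.cons_val_zero] at hc
      have hc0 : c ≠ 0 := by
        intro h0; rw [h0, zero_smul] at hc; exact one_ne_zero hc.symm
      apply not_alg_sqrt c⁻¹ α hα
      rw [map_inv₀]
      rw [Algebra.smul_def] at hc
      exact eq_inv_of_mul_eq_one_right hc
  have hsp : Submodule.span ℚ_[2] (Set.range ![(1 : L), α]) = ⊤ :=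
    hli.span_eq_top_of_card_eq_finrank (by simpa using hdim.symm)
  have hrange : Set.range ![(1 : L), α] = {1, α} := Matrix.range_cons_cons_empty 1 α _
  rw [hrange] at hsp
  have hu : u ∈ Submodule.span ℚ_[2] ({1, α} : Set L) := by rw [hsp]; trivial
  obtain ⟨a, b, hab⟩ := Submodule.mem_span_pair.mp hu
  refine ⟨a, b, ?_⟩
  rw [← hab, Algebra.smul_def, Algebra.smul_def, mul_one]

lemma mul_pair (α : L) (hα : α ^ 2 = -1) (a b c d : ℚ_[2]) :
    (algebraMap ℚ_[2] L a + algebraMap ℚ_[2] L b * α)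
      * (algebraMap ℚ_[2] L c + algebraMap ℚ_[2] L d * α)
    = algebraMap ℚ_[2] L (a * c - b * d) + algebraMap ℚ_[2] L (a * d + b * c) * α := by
  rw [map_sub, map_add, map_mul, map_mul, map_mul, map_mul]
  linear_combination (algebraMap ℚ_[2] L b * algebraMap ℚ_[2] L d) * hα
end Alg


lemma coe_two : ((2 : ℤ_[2]) : ℚ_[2]) = 2 := rfl

set_option maxHeartbeats 2000000 in
lemma dec1 : ∀ K X Y S T : ZMod (2 ^ 3),
    2*S*T - 1 + ((4*K+1)+(4*K+3))*(2*X*Y) + (4*K+1)*(4*K+3)*((X^2-Y^2)^2 - (2*X*Y)^2) = 0 →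
    -(S^2-T^2) - ((4*K+1)+(4*K+3))*(X^2-Y^2) + (4*K+1)*(4*K+3)*(2*(X^2-Y^2)*(2*X*Y)) = 0 →
    False := by decide

set_option maxHeartbeats 2000000 in
lemma dec2 : ∀ K X Y S T : ZMod (2 ^ 3),
    2*S*T - ((X^2-Y^2)^2 - (2*X*Y)^2) + ((4*K+1)+(4*K+3))*(2*X*Y) + (4*K+1)*(4*K+3) = 0 →
    -(S^2-T^2) - 2*(X^2-Y^2)*(2*X*Y) - ((4*K+1)+(4*K+3))*(X^2-Y^2) = 0 →
    False := by decide

lemma case1_comp (p q k : ℕ) (hp4 : p = 4*k+1) (hq4 : q = 4*k+3)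
    (x y s t : ℚ_[2]) (hx : ‖x‖ ≤ 1) (hy : ‖y‖ ≤ 1)
    (e1 : 2*s*t - 1 + ((p:ℚ_[2])+(q:ℚ_[2]))*(2*x*y)
        + (p:ℚ_[2])*(q:ℚ_[2])*((x^2-y^2)^2 - (2*x*y)^2) = 0)
    (e2 : -(s^2-t^2) - ((p:ℚ_[2])+(q:ℚ_[2]))*(x^2-y^2)
        + (p:ℚ_[2])*(q:ℚ_[2])*(2*(x^2-y^2)*(2*x*y)) = 0) : False := by
  set x' : ℤ_[2] := ⟨x, hx⟩ with hx'def
  set y' : ℤ_[2] := ⟨y, hy⟩ with hy'def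
  have hx' : (x' : ℚ_[2]) = x := rfl
  have hy' : (y' : ℚ_[2]) = y := rfl
  -- s, t are integral
  have hst : ‖s‖ ≤ 1 ∧ ‖t‖ ≤ 1 := by
    apply coords_int
    · have h : s^2 - t^2 = ((-((p:ℤ_[2])+(q:ℤ_[2]))*(x'^2-y'^2)
          + (p:ℤ_[2])*(q:ℤ_[2])*(2*(x'^2-y'^2)*(2*x'*y')) : ℤ_[2]) : ℚ_[2]) := by
        push_cast [hx', hy', coe_two]
        linear_combination -e2
      rw [h, PadicInt.padic_norm_e_of_padicInt]
      exact PadicInt.norm_le_one _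
    · have h : 2*s*t = ((1 - ((p:ℤ_[2])+(q:ℤ_[2]))*(2*x'*y')
          - (p:ℤ_[2])*(q:ℤ_[2])*((x'^2-y'^2)^2 - (2*x'*y')^2) : ℤ_[2]) : ℚ_[2]) := by
        push_cast [hx', hy', coe_two]
        linear_combination e1
      rw [h, PadicInt.padic_norm_e_of_padicInt]
      exact PadicInt.norm_le_one _
  obtain ⟨hs, ht⟩ := hst
  set s' : ℤ_[2] := ⟨s, hs⟩ with hs'def
  set t' : ℤ_[2] := ⟨t, ht⟩ with ht'def
  have hs' : (s' : ℚ_[2]) = s := rfl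
  have ht' : (t' : ℚ_[2]) = t := rfl
  -- integral versions of the equations
  have ze1 : (2*s'*t' - 1 + ((p:ℤ_[2])+(q:ℤ_[2]))*(2*x'*y')
      + (p:ℤ_[2])*(q:ℤ_[2])*((x'^2-y'^2)^2 - (2*x'*y')^2) : ℤ_[2]) = 0 := by
    rw [← PadicInt.coe_eq_zero]
    push_cast [hx', hy', hs', ht', coe_two]
    linear_combination e1
  have ze2 : (-(s'^2-t'^2) - ((p:ℤ_[2])+(q:ℤ_[2]))*(x'^2-y'^2)
      + (p:ℤ_[2])*(q:ℤ_[2])*(2*(x'^2-y'^2)*(2*x'*y')) : ℤ_[2]) = 0 := by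
    rw [← PadicInt.coe_eq_zero]
    push_cast [hx', hy', hs', ht', coe_two]
    linear_combination e2
  -- map to ZMod 8
  have m1 := congrArg (PadicInt.toZModPow 3) ze1
  have m2 := congrArg (PadicInt.toZModPow 3) ze2
  simp only [map_add, map_sub, map_mul, map_pow, map_one, map_neg, map_ofNat,
    map_natCast, map_zero] at m1 m2
  have hp8 : ((p:ℕ) : ZMod (2^3)) = 4*(k : ZMod (2^3)) + 1 := by rw [hp4]; push_cast; ring
  have hq8 : ((q:ℕ) : ZMod (2^3)) = 4*(k : ZMod (2^3)) + 3 := by rw [hq4]; push_cast; ring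
  rw [hp8, hq8] at m1 m2
  exact dec1 (k : ZMod (2^3)) (PadicInt.toZModPow 3 x') (PadicInt.toZModPow 3 y')
    (PadicInt.toZModPow 3 s') (PadicInt.toZModPow 3 t')
    (by linear_combination m1) (by linear_combination m2)





lemma case2_comp (p q k : ℕ) (hp4 : p = 4*k+1) (hq4 : q = 4*k+3)
    (x y s t : ℚ_[2]) (hx : ‖x‖ ≤ 1) (hy : ‖y‖ ≤ 1)
    (e1 : 2*s*t - ((x^2-y^2)^2 - (2*x*y)^2) + ((p:ℚ_[2])+(q:ℚ_[2]))*(2*x*y)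
        + (p:ℚ_[2])*(q:ℚ_[2]) = 0)
    (e2 : -(s^2-t^2) - 2*(x^2-y^2)*(2*x*y) - ((p:ℚ_[2])+(q:ℚ_[2]))*(x^2-y^2) = 0) : False := by
  set x' : ℤ_[2] := ⟨x, hx⟩ with hx'def
  set y' : ℤ_[2] := ⟨y, hy⟩ with hy'def
  have hx' : (x' : ℚ_[2]) = x := rfl
  have hy' : (y' : ℚ_[2]) = y := rfl
  have hst : ‖s‖ ≤ 1 ∧ ‖t‖ ≤ 1 := by
    apply coords_int
    · have h : s^2 - t^2 = ((-(2*(x'^2-y'^2)*(2*x'*y'))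
          - ((p:ℤ_[2])+(q:ℤ_[2]))*(x'^2-y'^2) : ℤ_[2]) : ℚ_[2]) := by
        push_cast [hx', hy', coe_two]
        linear_combination -e2
      rw [h, PadicInt.padic_norm_e_of_padicInt]
      exact PadicInt.norm_le_one _
    · have h : 2*s*t = ((((x'^2-y'^2)^2 - (2*x'*y')^2) - ((p:ℤ_[2])+(q:ℤ_[2]))*(2*x'*y')
          - (p:ℤ_[2])*(q:ℤ_[2]) : ℤ_[2]) : ℚ_[2]) := by
        push_cast [hx', hy', coe_two]
        linear_combination e1
      rw [h, PadicInt.padic_norm_e_of_padicInt]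
      exact PadicInt.norm_le_one _
  obtain ⟨hs, ht⟩ := hst
  set s' : ℤ_[2] := ⟨s, hs⟩ with hs'def
  set t' : ℤ_[2] := ⟨t, ht⟩ with ht'def
  have hs' : (s' : ℚ_[2]) = s := rfl
  have ht' : (t' : ℚ_[2]) = t := rfl
  have ze1 : (2*s'*t' - ((x'^2-y'^2)^2 - (2*x'*y')^2) + ((p:ℤ_[2])+(q:ℤ_[2]))*(2*x'*y')
      + (p:ℤ_[2])*(q:ℤ_[2]) : ℤ_[2]) = 0 := by
    rw [← PadicInt.coe_eq_zero]
    push_cast [hx', hy', hs', ht', coe_two]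
    linear_combination e1
  have ze2 : (-(s'^2-t'^2) - 2*(x'^2-y'^2)*(2*x'*y')
      - ((p:ℤ_[2])+(q:ℤ_[2]))*(x'^2-y'^2) : ℤ_[2]) = 0 := by
    rw [← PadicInt.coe_eq_zero]
    push_cast [hx', hy', hs', ht', coe_two]
    linear_combination e2
  have m1 := congrArg (PadicInt.toZModPow 3) ze1
  have m2 := congrArg (PadicInt.toZModPow 3) ze2
  simp only [map_add, map_sub, map_mul, map_pow, map_one, map_neg, map_ofNat,
    map_natCast, map_zero] at m1 m2
  have hp8 : ((p:ℕ) : ZMod (2^3)) = 4*(k : ZMod (2^3)) + 1 := by rw [hp4]; push_cast; ring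
  have hq8 : ((q:ℕ) : ZMod (2^3)) = 4*(k : ZMod (2^3)) + 3 := by rw [hq4]; push_cast; ring
  rw [hp8, hq8] at m1 m2
  exact dec2 (k : ZMod (2^3)) (PadicInt.toZModPow 3 x') (PadicInt.toZModPow 3 y')
    (PadicInt.toZModPow 3 s') (PadicInt.toZModPow 3 t')
    (by linear_combination m1) (by linear_combination m2)


/-- Let `p` and `q` be primes with `q = p + 2` and `p ≡ 1 (mod 4)`. Let `L` be a field
which is a `ℚ₂`-algebra of dimension 2 over `ℚ₂`, and `α ∈ L` with `α² = -1`. Then there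
are no `z, w ∈ L` with `-α·w² - 1 - (p+q)·α·z² + pq·z⁴ = 0`. -/
theorem stmt_14 (p q : ℕ) (hp : p.Prime) (hq : q.Prime) (hpq : q = p + 2)
    (hp1 : p % 4 = 1)
    (L : Type*) [Field L] [Algebra ℚ_[2] L] (hdim : Module.finrank ℚ_[2] L = 2)
    (α : L) (hα : α ^ 2 = -1) :
    ¬ ∃ z w : L,
        -α * w ^ 2 - 1 - ((p : L) + (q : L)) * α * z ^ 2 + (p : L) * (q : L) * z ^ 4 = 0 := by
  rintro ⟨z, w, hE⟩
  obtain ⟨k, hp4⟩ : ∃ k, p = 4*k+1 := ⟨p / 4, by omega⟩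
  have hq4 : q = 4*k+3 := by omega
  obtain ⟨x, y, hz⟩ := exists_coords hdim α hα z
  obtain ⟨s, t, hw⟩ := exists_coords hdim α hα w
  have hP : ((p:ℕ) : L) = algebraMap ℚ_[2] L (p:ℚ_[2]) := (map_natCast (algebraMap ℚ_[2] L) p).symm
  have hQ : ((q:ℕ) : L) = algebraMap ℚ_[2] L (q:ℚ_[2]) := (map_natCast (algebraMap ℚ_[2] L) q).symm
  rw [hP, hQ] at hE
  by_cases hint : ‖x‖ ≤ 1 ∧ ‖y‖ ≤ 1
  · -- Case 1 : z has integral coordinates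
    rw [hz, hw] at hE
    have hcomp : algebraMap ℚ_[2] L (2*s*t - 1 + ((p:ℚ_[2])+(q:ℚ_[2]))*(2*x*y)
          + (p:ℚ_[2])*(q:ℚ_[2])*((x^2-y^2)^2 - (2*x*y)^2))
        + algebraMap ℚ_[2] L (-(s^2-t^2) - ((p:ℚ_[2])+(q:ℚ_[2]))*(x^2-y^2)
          + (p:ℚ_[2])*(q:ℚ_[2])*(2*(x^2-y^2)*(2*x*y))) * α = 0 := by
      simp only [map_add, map_sub, map_mul, map_pow, map_one, map_neg, map_ofNat]
      linear_combination hE + ((2*(algebraMap ℚ_[2] L s)*(algebraMap ℚ_[2] L t) + (algebraMap ℚ_[2] L y)^4*(algebraMap ℚ_[2] L (p:ℚ_[2]))*(algebraMap ℚ_[2] L (q:ℚ_[2])) + 2*(algebraMap ℚ_[2] L x)*(algebraMap ℚ_[2] L y)*(algebraMap ℚ_[2] L (q:ℚ_[2])) + 2*(algebraMap ℚ_[2] L x)*(algebraMap ℚ_[2] L y)*(algebraMap ℚ_[2] L (p:ℚ_[2])) - 6*(algebraMap ℚ_[2] L x)^2*(algebraMap ℚ_[2] L y)^2*(algebraMap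 ℚ_[2] L (p:ℚ_[2]))*(algebraMap ℚ_[2] L (q:ℚ_[2]))) + α*((algebraMap ℚ_[2] L t)^2 + (algebraMap ℚ_[2] L y)^2*(algebraMap ℚ_[2] L (q:ℚ_[2])) + (algebraMap ℚ_[2] L y)^2*(algebraMap ℚ_[2] L (p:ℚ_[2])) - 4*(algebraMap ℚ_[2] L x)*(algebraMap ℚ_[2] L y)^3*(algebraMap ℚ_[2] L (p:ℚ_[2]))*(algebraMap ℚ_[2] L (q:ℚ_[2]))) - α^2*((algebraMap ℚ_[2] L y)^4*(algebraMap ℚ_[2] L (p:ℚ_[2]))*(algebraMap ℚ_[2] L (q:ℚ_[2])))) * hα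
    obtain ⟨e1, e2⟩ := indep_pair α hα _ _ hcomp
    exact case1_comp p q k hp4 hq4 x y s t hint.1 hint.2 e1 e2
  · -- Case 2 : z is non-integral, pass to Z = z⁻¹
    have hM : 2 ≤ max ‖x‖ ‖y‖ := by
      rcases not_and_or.mp hint with h | h
      · exact le_trans (two_le_norm_of_one_lt x (not_le.mp h)) (le_max_left _ _)
      · exact le_trans (two_le_norm_of_one_lt y (not_le.mp h)) (le_max_right _ _)
    set n : ℚ_[2] := x^2 + y^2 with hn
    have a1 : ‖x‖^2 ≤ 2*‖n‖ := normN x y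
    have a2 : ‖y‖^2 ≤ 2*‖n‖ := by
      have := normN y x
      rwa [add_comm (y^2) (x^2)] at this
    have hmax2 : (max ‖x‖ ‖y‖)^2 ≤ 2*‖n‖ := by
      rcases max_choice ‖x‖ ‖y‖ with h | h <;> rw [h]
      · exact a1
      · exact a2
    have hxn : ‖x‖ ≤ ‖n‖ := by
      have h1 : ‖x‖ ≤ max ‖x‖ ‖y‖ := le_max_left _ _
      nlinarith [norm_nonneg x, norm_nonneg y]
    have hyn : ‖y‖ ≤ ‖n‖ := by
      have h1 : ‖y‖ ≤ max ‖x‖ ‖y‖ := le_max_right _ _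
      nlinarith [norm_nonneg x, norm_nonneg y]
    have hn0 : n ≠ 0 := by
      rw [hn]
      intro h0
      by_cases hy0 : y = 0
      · rw [hy0] at h0 hM
        have hx0 : x = 0 := sq_eq_zero_iff.mp (by linear_combination h0)
        rw [hx0] at hM
        simp at hM
        norm_num at hM
      · apply neg_one_not_sq (x / y)
        field_simp
        linear_combination h0
    have hnpos : 0 < ‖n‖ := norm_pos_iff.mpr hn0
    set x2 : ℚ_[2] := x / n with hx2def
    set y2 : ℚ_[2] := -(y / n) with hy2def
    have hx2 : ‖x2‖ ≤ 1 := by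
      rw [hx2def, norm_div]
      exact div_le_one_of_le₀ hxn (le_of_lt hnpos)
    have hy2 : ‖y2‖ ≤ 1 := by
      rw [hy2def, norm_neg, norm_div]
      exact div_le_one_of_le₀ hyn (le_of_lt hnpos)
    have hc1 : x*x2 - y*y2 = 1 := by
      rw [hx2def, hy2def]
      field_simp
      linear_combination -hn
    have hc2 : x*y2 + y*x2 = 0 := by
      rw [hx2def, hy2def]
      field_simp
      ring
    have hzZ : z * (algebraMap ℚ_[2] L x2 + algebraMap ℚ_[2] L y2 * α) = 1 := by
      rw [hz, mul_pair α hα, hc1, hc2, map_one, map_zero, zero_mul, add_zero]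
    have hE2 : -α*(w * (algebraMap ℚ_[2] L x2 + algebraMap ℚ_[2] L y2 * α)^2)^2 - (algebraMap ℚ_[2] L x2 + algebraMap ℚ_[2] L y2 * α)^4
        - ((algebraMap ℚ_[2] L (p:ℚ_[2])) + (algebraMap ℚ_[2] L (q:ℚ_[2])))*α*(algebraMap ℚ_[2] L x2 + algebraMap ℚ_[2] L y2 * α)^2 + (algebraMap ℚ_[2] L (p:ℚ_[2]))*(algebraMap ℚ_[2] L (q:ℚ_[2])) = 0 := by
      linear_combination (algebraMap ℚ_[2] L x2 + algebraMap ℚ_[2] L y2 * α)^4 * hE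
        + (((algebraMap ℚ_[2] L (p:ℚ_[2]))+(algebraMap ℚ_[2] L (q:ℚ_[2])))*α*(algebraMap ℚ_[2] L x2 + algebraMap ℚ_[2] L y2 * α)^2*(z*(algebraMap ℚ_[2] L x2 + algebraMap ℚ_[2] L y2 * α)+1)
          - (algebraMap ℚ_[2] L (p:ℚ_[2]))*(algebraMap ℚ_[2] L (q:ℚ_[2]))*(z*(algebraMap ℚ_[2] L x2 + algebraMap ℚ_[2] L y2 * α)+1)*(z^2*(algebraMap ℚ_[2] L x2 + algebraMap ℚ_[2] L y2 * α)^2+1)) * hzZ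
    obtain ⟨u, v, hW⟩ := exists_coords hdim α hα (w * (algebraMap ℚ_[2] L x2 + algebraMap ℚ_[2] L y2 * α)^2)
    rw [hW] at hE2
    have hcomp2 : algebraMap ℚ_[2] L (2*u*v - ((x2^2-y2^2)^2 - (2*x2*y2)^2)
          + ((p:ℚ_[2])+(q:ℚ_[2]))*(2*x2*y2) + (p:ℚ_[2])*(q:ℚ_[2]))
        + algebraMap ℚ_[2] L (-(u^2-v^2) - 2*(x2^2-y2^2)*(2*x2*y2)
          - ((p:ℚ_[2])+(q:ℚ_[2]))*(x2^2-y2^2)) * α = 0 := by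
      simp only [map_add, map_sub, map_mul, map_pow, map_one, map_neg, map_ofNat]
      linear_combination hE2 + ((2*(algebraMap ℚ_[2] L u)*(algebraMap ℚ_[2] L v) - (algebraMap ℚ_[2] L y2)^4 + 2*(algebraMap ℚ_[2] L x2)*(algebraMap ℚ_[2] L y2)*(algebraMap ℚ_[2] L (q:ℚ_[2])) + 2*(algebraMap ℚ_[2] L x2)*(algebraMap ℚ_[2] L y2)*(algebraMap ℚ_[2] L (p:ℚ_[2])) + 6*(algebraMap ℚ_[2] L x2)^2*(algebraMap ℚ_[2] L y2)^2) + α*((algebraMap ℚ_[2] L v)^2 + (algebraMap ℚ_[2] L y2)^2*(algebraMap ℚ_[2] L (q:ℚ_[2])) + (algebraMap ℚ_[2] L y2)^2*(algebraMap ℚ_[2] L (p:ℚ_[2])) + 4*(algebraMap ℚ_[2] L x2)*(algebraMap ℚ_[2] L y2)^3) + α^2*((algebraMap ℚ_[2] L y2)^4)) * hα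
    obtain ⟨f1, f2⟩ := indep_pair α hα _ _ hcomp2
    exact case2_comp p q k hp4 hq4 x2 y2 u v hx2 hy2 f1 f2
end
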